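/- arXiv:2502.01566 — 5 statements merged into one kernel-verified Lean document; each statement's English description precedes it below -/
import Mathlib

section
/- Let N ≥ 3 and 1 < k < N-1 < β. Then there exists a constant C₁ = C₁(N,k,β) > 0 such that ∫_{ℝ^{N-1}} |y'-z'|^{-k} (1+|z'|)^{-β} dz' ≤ C₁ (1+|y'|)^{-k} for all y' ∈ ℝ^{N-1}. -/
open MeasureTheory ENNReal Filter

noncomputable section

/-- The point `(y', t) ∈ ℝ^N` for `y' ∈ ℝ^{N-1}`, `t ∈ ℝ`. -/
def up (N : ℕ) (y' : EuclideanSpace ℝ (Fin (N - 1))) (t : ℝ) : EuclideanSpace ℝ (Fin N) :=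
  (WithLp.equiv 2 (Fin N → ℝ)).symm fun i => if h : (i : ℕ) < N - 1 then y' ⟨i, h⟩ else t

/-- The last coordinate `x_N` of `x ∈ ℝ^N`. -/
def ht (N : ℕ) (x : EuclideanSpace ℝ (Fin N)) : ℝ :=
  if h : N - 1 < N then x ⟨N - 1, h⟩ else 0

/-- Reflection `x̄ = (x', -x_N)` of `x = (x', x_N)` in the hyperplane `x_N = 0`. -/
def reflN (N : ℕ) (x : EuclideanSpace ℝ (Fin N)) : EuclideanSpace ℝ (Fin N) :=
  (WithLp.equiv 2 (Fin N → ℝ)).symm fun i => if (i : ℕ) < N - 1 then x i else -x i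

/-- Surface area `σ_N` of the unit sphere in `ℝ^N` (equal to `N` times the unit ball volume). -/
def sphereArea (N : ℕ) : ℝ :=
  N * (volume (Metric.ball (0 : EuclideanSpace ℝ (Fin N)) 1)).toReal

/-- The open upper half space `ℝ^N_+ = ℝ^{N-1} × (0,∞)`. -/
def upperHalf (N : ℕ) : Set (EuclideanSpace ℝ (Fin N)) := {x | 0 < ht N x}

/-- `H_u(x') = ∫_{ℝ^{N-1}} u(y',0)^p |x'-y'|^{-k} dy'`. -/
def Hu (N : ℕ) (p k : ℝ) (u : EuclideanSpace ℝ (Fin N) → ℝ)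
    (x' : EuclideanSpace ℝ (Fin (N - 1))) : ℝ≥0∞ :=
  ∫⁻ y', ENNReal.ofReal (u (up N y' 0)) ^ p * ENNReal.ofReal ‖x' - y'‖ ^ (-k)

/-- The Newtonian potential `U^ν(x) = (1/((N-2)σ_N)) ∫ |x-y|^{2-N} dν(y)`. -/
def NewtPot (N : ℕ) (ν : Measure (EuclideanSpace ℝ (Fin N)))
    (x : EuclideanSpace ℝ (Fin N)) : ℝ :=
  (((N : ℝ) - 2) * sphereArea N)⁻¹ * (∫⁻ y, ENNReal.ofReal ‖x - y‖ ^ ((2:ℝ) - N) ∂ν).toReal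

/-- The Green potential `∫_{ℝ^N_+} G(x,y) dμ(y)` for the Neumann Green function
`G(x,y) = (|x-y|^{2-N} + |x̄-y|^{2-N})/((N-2)σ_N)` of the half space. -/
def GreenPot (N : ℕ) (μ : Measure (EuclideanSpace ℝ (Fin N)))
    (x : EuclideanSpace ℝ (Fin N)) : ℝ :=
  (((N : ℝ) - 2) * sphereArea N)⁻¹ *
    (∫⁻ y, (ENNReal.ofReal ‖x - y‖ ^ ((2:ℝ) - N)
          + ENNReal.ofReal ‖reflN N x - y‖ ^ ((2:ℝ) - N)) ∂μ).toReal

/-- `μ` is a nonzero Radon (locally finite Borel) measure whose support is contained in the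
open upper half space and whose Newtonian potential is finite everywhere. -/
def AdmissibleMeasure (N : ℕ) (μ : Measure (EuclideanSpace ℝ (Fin N))) : Prop :=
  μ ≠ 0 ∧ IsLocallyFiniteMeasure μ ∧
    (∃ F : Set (EuclideanSpace ℝ (Fin N)), IsClosed F ∧ F ⊆ upperHalf N ∧ μ Fᶜ = 0) ∧
    (∀ x, (∫⁻ y, ENNReal.ofReal ‖x - y‖ ^ ((2:ℝ) - N) ∂μ) < ⊤)

/-- A measurable function `u` is a positive solution of problem (1.1):
(i) `u > 0` a.e. in `ℝ^N_+`, and for a.e. `x' ∈ ℝ^{N-1}`, `u(z) → u(x',0)` as `z → (x',0)`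
with `z ∈ ℝ^N_+`;
(ii) `H_u < ∞` a.e. in `ℝ^{N-1}`, and `∫_{ℝ^{N-1}} H_u(y')|x-(y',0)|^{2-N} dy' < ∞` for
a.e. `x ∈ ℝ^N_+`;
(iii) `u(x) = ∫_{ℝ^N_+} G(x,y) dμ(y)
　　　　+ (2λ/((N-2)σ_N)) ∫∫ u(z',0)^p |x-(y',0)|^{2-N} |y'-z'|^{-k} dz' dy'`
for a.e. `x ∈ ℝ^N_+`. -/
def IsPosSolution (N : ℕ) (p lam k : ℝ) (μ : Measure (EuclideanSpace ℝ (Fin N)))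
    (u : EuclideanSpace ℝ (Fin N) → ℝ) : Prop :=
  Measurable u ∧
  (∀ᵐ x ∂(volume.restrict (upperHalf N)), 0 < u x) ∧
  (∀ᵐ x' ∂(volume : Measure (EuclideanSpace ℝ (Fin (N - 1)))),
    Tendsto u (nhdsWithin (up N x' 0) (upperHalf N)) (nhds (u (up N x' 0)))) ∧
  (∀ᵐ x' ∂(volume : Measure (EuclideanSpace ℝ (Fin (N - 1)))), Hu N p k u x' < ⊤) ∧
  (∀ᵐ x ∂(volume.restrict (upperHalf N)),
    (∫⁻ y', Hu N p k u y' * ENNReal.ofReal ‖x - up N y' 0‖ ^ ((2:ℝ) - N)) < ⊤) ∧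
  (∀ᵐ x ∂(volume.restrict (upperHalf N)),
    ENNReal.ofReal (u x) =
      ENNReal.ofReal (((N : ℝ) - 2) * sphereArea N)⁻¹ *
        (∫⁻ y, (ENNReal.ofReal ‖x - y‖ ^ ((2:ℝ) - N)
              + ENNReal.ofReal ‖reflN N x - y‖ ^ ((2:ℝ) - N)) ∂μ) +
      ENNReal.ofReal (2 * lam / (((N : ℝ) - 2) * sphereArea N)) *
        ∫⁻ y', ENNReal.ofReal ‖x - up N y' 0‖ ^ ((2:ℝ) - N) * Hu N p k u y')

/-- A measurable function `u` is a positive solution of problem (1.1) with `μ ≡ 0`: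
conditions (i), (ii) as above and
(iii) `u(x) = (2λ/((N-2)σ_N)) ∫∫ u(z',0)^p |x-(y',0)|^{2-N} |y'-z'|^{-k} dz' dy'`
for a.e. `x ∈ ℝ^N_+`. -/
def IsPosSolution0 (N : ℕ) (p lam k : ℝ) (u : EuclideanSpace ℝ (Fin N) → ℝ) : Prop :=
  Measurable u ∧
  (∀ᵐ x ∂(volume.restrict (upperHalf N)), 0 < u x) ∧
  (∀ᵐ x' ∂(volume : Measure (EuclideanSpace ℝ (Fin (N - 1)))),
    Tendsto u (nhdsWithin (up N x' 0) (upperHalf N)) (nhds (u (up N x' 0)))) ∧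
  (∀ᵐ x' ∂(volume : Measure (EuclideanSpace ℝ (Fin (N - 1)))), Hu N p k u x' < ⊤) ∧
  (∀ᵐ x ∂(volume.restrict (upperHalf N)),
    (∫⁻ y', Hu N p k u y' * ENNReal.ofReal ‖x - up N y' 0‖ ^ ((2:ℝ) - N)) < ⊤) ∧
  (∀ᵐ x ∂(volume.restrict (upperHalf N)),
    ENNReal.ofReal (u x) =
      ENNReal.ofReal (2 * lam / (((N : ℝ) - 2) * sphereArea N)) *
        ∫⁻ y', ENNReal.ofReal ‖x - up N y' 0‖ ^ ((2:ℝ) - N) * Hu N p k u y')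

/-- The boundary trace `x' ↦ u(x',0)` belongs to `L^q_loc(ℝ^{N-1})`. -/
def BdryLocLp (N : ℕ) (q : ℝ) (u : EuclideanSpace ℝ (Fin N) → ℝ) : Prop :=
  ∀ K : Set (EuclideanSpace ℝ (Fin (N - 1))), IsCompact K →
    MemLp (fun x' => u (up N x' 0)) (ENNReal.ofReal q) (volume.restrict K)


open Metric Set


lemma aux_ball_finite {n : ℕ} (hn : 0 < n) {k : ℝ} (hk : 0 < k) (hkn : k < n) :
    (∫⁻ z in Metric.ball (0 : EuclideanSpace ℝ (Fin n)) 1, ENNReal.ofReal ‖z‖ ^ (-k)) < ⊤ := by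
  haveI : Nontrivial (EuclideanSpace ℝ (Fin n)) :=
    Module.nontrivial_of_finrank_pos (R := ℝ) (by rw [finrank_euclideanSpace_fin]; exact hn)
  have hmeas : Measurable fun z : EuclideanSpace ℝ (Fin n) => ‖z‖ ^ (-k) := by fun_prop
  have h0 : ∀ᵐ z ∂(volume.restrict (Metric.ball (0 : EuclideanSpace ℝ (Fin n)) 1)), z ≠ (0 : EuclideanSpace ℝ (Fin n)) := by
    refine ae_restrict_of_ae ?_
    rw [ae_iff]
    simpa using measure_singleton (0 : EuclideanSpace ℝ (Fin n))
  have hcongr : (∫⁻ z in Metric.ball (0 : EuclideanSpace ℝ (Fin n)) 1, ENNReal.ofReal ‖z‖ ^ (-k))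
      = ∫⁻ z in Metric.ball (0 : EuclideanSpace ℝ (Fin n)) 1, ENNReal.ofReal (‖z‖ ^ (-k)) := by
    refine lintegral_congr_ae ?_
    filter_upwards [h0] with z hz
    rw [ENNReal.ofReal_rpow_of_pos (norm_pos_iff.mpr hz)]
  rw [hcongr, lintegral_eq_lintegral_meas_le _ (Eventually.of_forall fun z => by positivity)
    hmeas.aemeasurable]
  -- now bound the layer-cake integral
  set μ := volume.restrict (Metric.ball (0 : EuclideanSpace ℝ (Fin n)) 1) with hμ
  calc ∫⁻ t in Ioi (0:ℝ), μ {a | t ≤ ‖a‖ ^ (-k)}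
      ≤ ∫⁻ t in Ioc (0:ℝ) 1 ∪ Ioi 1, μ {a | t ≤ ‖a‖ ^ (-k)} :=
        lintegral_mono_set Ioi_subset_Ioc_union_Ioi
    _ ≤ (∫⁻ t in Ioc (0:ℝ) 1, μ {a | t ≤ ‖a‖ ^ (-k)}) + ∫⁻ t in Ioi (1:ℝ), μ {a | t ≤ ‖a‖ ^ (-k)} :=
        lintegral_union_le _ _ _
    _ < ⊤ := by
        refine ENNReal.add_lt_top.2 ⟨?_, ?_⟩
        · calc (∫⁻ t in Ioc (0:ℝ) 1, μ {a | t ≤ ‖a‖ ^ (-k)})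
              ≤ ∫⁻ _ in Ioc (0:ℝ) 1, volume (Metric.ball (0 : EuclideanSpace ℝ (Fin n)) 1) := by
                refine lintegral_mono fun t => ?_
                calc μ {a | t ≤ ‖a‖ ^ (-k)} ≤ μ Set.univ := measure_mono (subset_univ _)
                  _ = volume (Metric.ball (0 : EuclideanSpace ℝ (Fin n)) 1) := by
                      rw [hμ, Measure.restrict_apply_univ]
            _ = volume (Metric.ball (0 : EuclideanSpace ℝ (Fin n)) 1) * volume (Ioc (0:ℝ) 1) :=
                setLIntegral_const _ _
            _ < ⊤ := ENNReal.mul_lt_top measure_ball_lt_top (by simp)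
        · have hbd : ∀ t ∈ Ioi (1:ℝ), μ {a | t ≤ ‖a‖ ^ (-k)}
              ≤ ENNReal.ofReal (t ^ (-((n:ℝ)/k))) * volume (Metric.ball (0 : EuclideanSpace ℝ (Fin n)) 1) := by
            intro t ht
            have ht0 : (0:ℝ) < t := lt_trans one_pos ht
            have hsub : {a : EuclideanSpace ℝ (Fin n) | t ≤ ‖a‖ ^ (-k)}
                ⊆ Metric.closedBall 0 (t ^ (-k⁻¹)) := by
              intro a ha
              simp only [mem_setOf_eq] at ha
              have ha0 : a ≠ 0 := by
                rintro rfl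
                rw [norm_zero, Real.zero_rpow (by linarith : -k ≠ 0)] at ha
                linarith
              rw [Metric.mem_closedBall, dist_zero_right]
              have := (Real.le_rpow_inv_iff_of_neg (norm_pos_iff.mpr ha0) ht0
                (by linarith : -k < 0)).mpr ha
              rwa [← neg_inv] at this
            calc μ {a | t ≤ ‖a‖ ^ (-k)} ≤ volume (Metric.closedBall (0 : EuclideanSpace ℝ (Fin n)) (t ^ (-k⁻¹))) :=
                le_trans (le_trans (measure_mono hsub) (Measure.restrict_le_self _)) le_rfl
              _ = ENNReal.ofReal ((t ^ (-k⁻¹)) ^ n) * volume (Metric.ball (0 : EuclideanSpace ℝ (Fin n)) 1) := by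
                  rw [Measure.addHaar_closedBall _ _ (by positivity)]
                  rw [finrank_euclideanSpace_fin]
              _ = ENNReal.ofReal (t ^ (-((n:ℝ)/k))) * volume (Metric.ball (0 : EuclideanSpace ℝ (Fin n)) 1) := by
                  rw [← Real.rpow_natCast (t ^ (-k⁻¹)) n, ← Real.rpow_mul ht0.le]
                  ring_nf
          calc (∫⁻ t in Ioi (1:ℝ), μ {a | t ≤ ‖a‖ ^ (-k)})
              ≤ ∫⁻ t in Ioi (1:ℝ), ENNReal.ofReal (t ^ (-((n:ℝ)/k))) * volume (Metric.ball (0 : EuclideanSpace ℝ (Fin n)) 1) :=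
                setLIntegral_mono' measurableSet_Ioi hbd
            _ = (∫⁻ t in Ioi (1:ℝ), ENNReal.ofReal (t ^ (-((n:ℝ)/k)))) * volume (Metric.ball (0 : EuclideanSpace ℝ (Fin n)) 1) :=
                lintegral_mul_const' _ _ measure_ball_lt_top.ne
            _ < ⊤ := by
                refine ENNReal.mul_lt_top ?_ measure_ball_lt_top
                refine IntegrableOn.setLIntegral_lt_top ?_
                refine integrableOn_Ioi_rpow_of_lt ?_ one_pos
                rw [neg_lt_neg_iff, lt_div_iff₀ hk]
                nlinarith


lemma ofReal_rpow_ne_top {r s : ℝ} (hr : 0 < r) : ENNReal.ofReal r ^ s ≠ ⊤ := by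
  rw [Ne, ENNReal.rpow_eq_top_iff]
  push_neg
  constructor
  · intro h; exact absurd h (by simp [hr, hr.le])
  · intro h; exact absurd h ENNReal.ofReal_ne_top

lemma aux_scaling {n : ℕ} (hn : 0 < n) {k : ℝ} (hk : 0 < k)
    (y : EuclideanSpace ℝ (Fin n)) (r : ℝ) (hr : 0 < r) :
    (∫⁻ z in Metric.ball y r, ENNReal.ofReal ‖y - z‖ ^ (-k))
      = (∫⁻ z in Metric.ball (0 : EuclideanSpace ℝ (Fin n)) 1, ENNReal.ofReal ‖z‖ ^ (-k))
        * ENNReal.ofReal r ^ ((n:ℝ) - k) := by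
  set g : EuclideanSpace ℝ (Fin n) → ℝ≥0∞ := fun w => ENNReal.ofReal ‖w‖ ^ (-k) with hg
  have hgm : Measurable g := by fun_prop
  -- translation
  have h1 : (∫⁻ z in Metric.ball y r, ENNReal.ofReal ‖y - z‖ ^ (-k))
      = ∫⁻ w in Metric.ball (0 : EuclideanSpace ℝ (Fin n)) r, g w := by
    have hmp : MeasurePreserving (fun z : EuclideanSpace ℝ (Fin n) => y - z) volume volume :=
      Measure.measurePreserving_sub_left volume y
    have hemb : MeasurableEmbedding (fun z : EuclideanSpace ℝ (Fin n) => y - z) :=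
      (MeasurableEquiv.subLeft y).measurableEmbedding
    have hpre : (fun z : EuclideanSpace ℝ (Fin n) => y - z) ⁻¹' (Metric.ball (0 : EuclideanSpace ℝ (Fin n)) r) = Metric.ball y r := by
      ext z
      simp [Metric.mem_ball, dist_eq_norm, norm_sub_rev]
    rw [← hpre]
    exact hmp.setLIntegral_comp_preimage_emb hemb g _
  -- scaling
  have hsm : Measurable fun w : EuclideanSpace ℝ (Fin n) => r • w := measurable_const_smul r
  have hmap := Measure.map_addHaar_smul (volume : Measure (EuclideanSpace ℝ (Fin n))) (ne_of_gt hr)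
  have hrn : (0:ℝ) < r ^ n := by positivity
  have h2 : (∫⁻ w in Metric.ball (0 : EuclideanSpace ℝ (Fin n)) r, g w ∂(Measure.map (r • ·) volume))
      = ENNReal.ofReal ((r ^ n)⁻¹) * ∫⁻ w in Metric.ball (0 : EuclideanSpace ℝ (Fin n)) r, g w := by
    rw [hmap]
    rw [finrank_euclideanSpace_fin, abs_of_pos (by positivity)]
    rw [Measure.restrict_smul, lintegral_smul_measure, smul_eq_mul]
  have hpre2 : (fun w : EuclideanSpace ℝ (Fin n) => r • w) ⁻¹' (Metric.ball (0 : EuclideanSpace ℝ (Fin n)) r) = Metric.ball (0 : EuclideanSpace ℝ (Fin n)) 1 := by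
    ext w
    simp only [mem_preimage, Metric.mem_ball, dist_zero_right]
    rw [norm_smul, Real.norm_eq_abs, abs_of_pos hr]
    constructor
    · intro h; nlinarith [norm_nonneg w]
    · intro h; nlinarith [norm_nonneg w]
  have h3 : (∫⁻ w in Metric.ball (0 : EuclideanSpace ℝ (Fin n)) r, g w ∂(Measure.map (r • ·) volume))
      = ∫⁻ w in Metric.ball (0 : EuclideanSpace ℝ (Fin n)) 1, g (r • w) := by
    rw [setLIntegral_map measurableSet_ball hgm hsm, hpre2]
  have h4 : ∀ w : EuclideanSpace ℝ (Fin n), g (r • w) = ENNReal.ofReal r ^ (-k) * g w := by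
    intro w
    rw [hg]
    simp only
    rw [norm_smul, Real.norm_eq_abs, abs_of_pos hr, ENNReal.ofReal_mul hr.le,
      ENNReal.mul_rpow_of_ne_top ENNReal.ofReal_ne_top ENNReal.ofReal_ne_top]
  have h5 : (∫⁻ w in Metric.ball (0 : EuclideanSpace ℝ (Fin n)) 1, g (r • w))
      = ENNReal.ofReal r ^ (-k) * ∫⁻ w in Metric.ball (0 : EuclideanSpace ℝ (Fin n)) 1, g w := by
    simp_rw [h4]
    exact lintegral_const_mul' _ _ (ofReal_rpow_ne_top hr)
  -- combine
  have key : ENNReal.ofReal ((r ^ n)⁻¹) * ∫⁻ w in Metric.ball (0 : EuclideanSpace ℝ (Fin n)) r, g w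
      = ENNReal.ofReal r ^ (-k) * ∫⁻ w in Metric.ball (0 : EuclideanSpace ℝ (Fin n)) 1, g w := by
    rw [← h2, h3, h5]
  have hne0 : ENNReal.ofReal (r ^ n) ≠ 0 := by simp [hrn]
  have hnetop : ENNReal.ofReal (r ^ n) ≠ ⊤ := ENNReal.ofReal_ne_top
  have key2 : (∫⁻ w in Metric.ball (0 : EuclideanSpace ℝ (Fin n)) r, g w)
      = ENNReal.ofReal (r ^ n) * (ENNReal.ofReal r ^ (-k) * ∫⁻ w in Metric.ball (0 : EuclideanSpace ℝ (Fin n)) 1, g w) := by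
    rw [← key, ENNReal.ofReal_inv_of_pos hrn, ← mul_assoc,
      ENNReal.mul_inv_cancel hne0 hnetop, one_mul]
  rw [h1, key2]
  rw [show ENNReal.ofReal (r ^ n) = ENNReal.ofReal r ^ (n:ℝ) by
    rw [← Real.rpow_natCast r n, ENNReal.ofReal_rpow_of_pos hr]]
  rw [show ((n:ℝ) - k) = (n:ℝ) + (-k) by ring,
    ENNReal.rpow_add _ _ (by simp [hr]) ENNReal.ofReal_ne_top]
  ring


lemma ofReal_rpow_ne_top' {r s : ℝ} (hr : 0 < r) : ENNReal.ofReal r ^ s ≠ ⊤ := by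
  rw [Ne, ENNReal.rpow_eq_top_iff]
  push_neg
  constructor
  · intro h; exact absurd h (by simp [hr, hr.le])
  · intro h; exact absurd h ENNReal.ofReal_ne_top

lemma ennreal_rpow_anti {a b : ℝ≥0∞} {s : ℝ} (hs : s ≤ 0) (hab : a ≤ b) : b ^ s ≤ a ^ s := by
  rw [show s = -(-s) by ring, ENNReal.rpow_neg b, ENNReal.rpow_neg a]
  exact ENNReal.inv_le_inv.mpr (ENNReal.rpow_le_rpow hab (by linarith))

lemma aux_tail {n : ℕ} {β : ℝ} (hβ : (n:ℝ) < β) :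
    (∫⁻ z : EuclideanSpace ℝ (Fin n), ENNReal.ofReal (1 + ‖z‖) ^ (-β)) < ⊤ := by
  have h : ∀ z : EuclideanSpace ℝ (Fin n),
      ENNReal.ofReal (1 + ‖z‖) ^ (-β) = ENNReal.ofReal ((1 + ‖z‖) ^ (-β)) := fun z =>
    ENNReal.ofReal_rpow_of_pos (by positivity)
  simp_rw [h]
  exact finite_integral_one_add_norm (by rwa [finrank_euclideanSpace_fin])

/-- Lemma 2.5: if `1 < k < N-1 < β` then there is `C₁ = C₁(N,k,β) > 0` with
`∫_{ℝ^{N-1}} |y'-z'|^{-k} (1+|z'|)^{-β} dz' ≤ C₁ (1+|y'|)^{-k}` for all `y' ∈ ℝ^{N-1}`. -/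
theorem integral_estimate_one
    (N : ℕ) (hN : 3 ≤ N) (k β : ℝ)
    (hk1 : 1 < k) (hkN : k < (N : ℝ) - 1) (hβ : (N : ℝ) - 1 < β) :
    ∃ C > 0, ∀ y' : EuclideanSpace ℝ (Fin (N - 1)),
      (∫⁻ z', ENNReal.ofReal ‖y' - z'‖ ^ (-k) * ENNReal.ofReal (1 + ‖z'‖) ^ (-β)) ≤
        ENNReal.ofReal (C * (1 + ‖y'‖) ^ (-k)) := by
  have hn : 0 < N - 1 := by omega
  have hcast : ((N - 1 : ℕ) : ℝ) = (N:ℝ) - 1 := by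
    have h1 : 1 ≤ N := by omega
    push_cast [Nat.cast_sub h1]
    ring
  have hk0 : 0 < k := lt_trans one_pos hk1
  have hkn : k < ((N - 1 : ℕ):ℝ) := by rw [hcast]; exact hkN
  have hβn : ((N - 1 : ℕ):ℝ) < β := by rw [hcast]; exact hβ
  set c := ∫⁻ z in Metric.ball (0 : EuclideanSpace ℝ (Fin (N-1))) 1, ENNReal.ofReal ‖z‖ ^ (-k) with hc
  have hcfin : c ≠ ⊤ := (aux_ball_finite hn hk0 hkn).ne
  set T := ∫⁻ z : EuclideanSpace ℝ (Fin (N-1)), ENNReal.ofReal (1 + ‖z‖) ^ (-β) with hT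
  have hTfin : T ≠ ⊤ := (aux_tail hβn).ne
  set A := c * ENNReal.ofReal (2 ^ β) + ENNReal.ofReal (2 ^ k) * T with hA
  have hAfin : A ≠ ⊤ := by
    rw [hA]
    exact (ENNReal.add_lt_top.mpr ⟨ENNReal.mul_lt_top hcfin.lt_top ENNReal.ofReal_lt_top,
      ENNReal.mul_lt_top ENNReal.ofReal_lt_top hTfin.lt_top⟩).ne
  refine ⟨A.toReal + 1, by positivity, fun y => ?_⟩
  set R := 1 + ‖y‖ with hR
  have hR1 : 1 ≤ R := by rw [hR]; simpa using norm_nonneg y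
  have hR0 : 0 < R := lt_of_lt_of_le one_pos hR1
  have hr : 0 < R/2 := by linarith
  have hball : (∫⁻ z in Metric.ball y (R/2), ENNReal.ofReal ‖y - z‖ ^ (-k) * ENNReal.ofReal (1 + ‖z‖) ^ (-β))
      ≤ c * ENNReal.ofReal (2 ^ β) * ENNReal.ofReal (R ^ (-k)) := by
    have hstep1 : ∀ z ∈ Metric.ball y (R/2),
        ENNReal.ofReal ‖y - z‖ ^ (-k) * ENNReal.ofReal (1 + ‖z‖) ^ (-β)
          ≤ ENNReal.ofReal (R/2) ^ (-β) * ENNReal.ofReal ‖y - z‖ ^ (-k) := by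
      intro z hz
      rw [mul_comm]
      refine mul_le_mul_left ?_ _
      refine ennreal_rpow_anti (by linarith) (ENNReal.ofReal_le_ofReal ?_)
      have h1 : ‖y - z‖ < R/2 := by
        rw [Metric.mem_ball, dist_comm, dist_eq_norm] at hz; exact hz
      have h2 : ‖y‖ - ‖z‖ ≤ ‖y - z‖ := norm_sub_norm_le y z
      rw [hR] at h1 ⊢; linarith
    calc (∫⁻ z in Metric.ball y (R/2), ENNReal.ofReal ‖y - z‖ ^ (-k) * ENNReal.ofReal (1 + ‖z‖) ^ (-β))
        ≤ ∫⁻ z in Metric.ball y (R/2), ENNReal.ofReal (R/2) ^ (-β) * ENNReal.ofReal ‖y - z‖ ^ (-k) :=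
          setLIntegral_mono' measurableSet_ball hstep1
      _ = ENNReal.ofReal (R/2) ^ (-β) * ∫⁻ z in Metric.ball y (R/2), ENNReal.ofReal ‖y - z‖ ^ (-k) :=
          lintegral_const_mul' _ _ (ofReal_rpow_ne_top' hr)
      _ = ENNReal.ofReal (R/2) ^ (-β) * (c * ENNReal.ofReal (R/2) ^ (((N-1:ℕ):ℝ) - k)) := by
          rw [aux_scaling hn hk0 y (R/2) hr, ← hc]
      _ = c * ENNReal.ofReal (R/2) ^ (((N-1:ℕ):ℝ) - k - β) := by
          rw [show ((N-1:ℕ):ℝ) - k - β = -β + (((N-1:ℕ):ℝ) - k) by ring,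
            ENNReal.rpow_add _ _ (ENNReal.ofReal_pos.mpr hr).ne' ENNReal.ofReal_ne_top]
          ring
      _ ≤ c * ENNReal.ofReal (2 ^ β * R ^ (-k)) := by
          refine mul_le_mul_right ?_ _
          rw [ENNReal.ofReal_rpow_of_pos hr]
          refine ENNReal.ofReal_le_ofReal ?_
          have e1 : (R/2) ^ (((N-1:ℕ):ℝ) - k - β) = R ^ (((N-1:ℕ):ℝ) - k - β) * 2 ^ (β + k - ((N-1:ℕ):ℝ)) := by
            rw [Real.div_rpow hR0.le (by norm_num : (0:ℝ) ≤ 2),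
              div_eq_mul_inv, ← Real.rpow_neg (by norm_num : (0:ℝ) ≤ 2)]
            ring_nf
          rw [e1]
          have e2 : R ^ (((N-1:ℕ):ℝ) - k - β) ≤ R ^ (-k) :=
            Real.rpow_le_rpow_of_exponent_le hR1 (by rw [hcast]; linarith)
          have e3 : (2:ℝ) ^ (β + k - ((N-1:ℕ):ℝ)) ≤ 2 ^ β :=
            Real.rpow_le_rpow_of_exponent_le one_le_two (by rw [hcast]; linarith)
          calc R ^ (((N-1:ℕ):ℝ) - k - β) * 2 ^ (β + k - ((N-1:ℕ):ℝ))
              ≤ R ^ (-k) * 2 ^ β :=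
                mul_le_mul e2 e3 (by positivity) (by positivity)
            _ = 2 ^ β * R ^ (-k) := mul_comm _ _
      _ = c * ENNReal.ofReal (2^β) * ENNReal.ofReal (R ^ (-k)) := by
          rw [ENNReal.ofReal_mul (by positivity), mul_assoc]
  have hcompl : (∫⁻ z in (Metric.ball y (R/2))ᶜ, ENNReal.ofReal ‖y - z‖ ^ (-k) * ENNReal.ofReal (1 + ‖z‖) ^ (-β))
      ≤ ENNReal.ofReal (2 ^ k) * T * ENNReal.ofReal (R ^ (-k)) := by
    have hstep1 : ∀ z ∈ (Metric.ball y (R/2))ᶜ,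
        ENNReal.ofReal ‖y - z‖ ^ (-k) * ENNReal.ofReal (1 + ‖z‖) ^ (-β)
          ≤ ENNReal.ofReal (R/2) ^ (-k) * ENNReal.ofReal (1 + ‖z‖) ^ (-β) := by
      intro z hz
      refine mul_le_mul_left ?_ _
      refine ennreal_rpow_anti (by linarith) (ENNReal.ofReal_le_ofReal ?_)
      simp only [mem_compl_iff, Metric.mem_ball, not_lt] at hz
      rwa [dist_comm, dist_eq_norm] at hz
    calc (∫⁻ z in (Metric.ball y (R/2))ᶜ, ENNReal.ofReal ‖y - z‖ ^ (-k) * ENNReal.ofReal (1 + ‖z‖) ^ (-β))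
        ≤ ∫⁻ z in (Metric.ball y (R/2))ᶜ, ENNReal.ofReal (R/2) ^ (-k) * ENNReal.ofReal (1 + ‖z‖) ^ (-β) :=
          setLIntegral_mono' measurableSet_ball.compl hstep1
      _ = ENNReal.ofReal (R/2) ^ (-k) * ∫⁻ z in (Metric.ball y (R/2))ᶜ, ENNReal.ofReal (1 + ‖z‖) ^ (-β) :=
          lintegral_const_mul' _ _ (ofReal_rpow_ne_top' hr)
      _ ≤ ENNReal.ofReal (R/2) ^ (-k) * T :=
          mul_le_mul_right (setLIntegral_le_lintegral _ _) _
      _ ≤ ENNReal.ofReal (2 ^ k * R ^ (-k)) * T := by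
          refine mul_le_mul_left ?_ _
          rw [ENNReal.ofReal_rpow_of_pos hr]
          refine ENNReal.ofReal_le_ofReal (le_of_eq ?_)
          rw [Real.div_rpow hR0.le (by norm_num : (0:ℝ) ≤ 2),
            div_eq_mul_inv, ← Real.rpow_neg (by norm_num : (0:ℝ) ≤ 2), neg_neg]
          ring
      _ = ENNReal.ofReal (2 ^ k) * T * ENNReal.ofReal (R ^ (-k)) := by
          rw [ENNReal.ofReal_mul (by positivity)]
          ring
  calc (∫⁻ z, ENNReal.ofReal ‖y - z‖ ^ (-k) * ENNReal.ofReal (1 + ‖z‖) ^ (-β))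
      = (∫⁻ z in Metric.ball y (R/2), ENNReal.ofReal ‖y - z‖ ^ (-k) * ENNReal.ofReal (1 + ‖z‖) ^ (-β))
        + ∫⁻ z in (Metric.ball y (R/2))ᶜ, ENNReal.ofReal ‖y - z‖ ^ (-k) * ENNReal.ofReal (1 + ‖z‖) ^ (-β) :=
        (lintegral_add_compl _ measurableSet_ball).symm
    _ ≤ c * ENNReal.ofReal (2 ^ β) * ENNReal.ofReal (R ^ (-k))
        + ENNReal.ofReal (2 ^ k) * T * ENNReal.ofReal (R ^ (-k)) := add_le_add hball hcompl
    _ = A * ENNReal.ofReal (R ^ (-k)) := by rw [hA, add_mul]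
    _ ≤ ENNReal.ofReal (A.toReal + 1) * ENNReal.ofReal (R ^ (-k)) := by
        refine mul_le_mul_left ?_ _
        conv_lhs => rw [← ENNReal.ofReal_toReal hAfin]
        exact ENNReal.ofReal_le_ofReal (by linarith)
    _ = ENNReal.ofReal ((A.toReal + 1) * R ^ (-k)) := by
        rw [ENNReal.ofReal_mul (by positivity)]


end
end

section
/- Let N ≥ 3 and 1 < k < N-1. Then there exists a constant C₂ = C₂(N,k) > 0 such that ∫_{ℝ^{N-1}} |x-(y',0)|^{-(N-2)} (1+|y'|)^{-k} dy' ≤ C₂ (1+|x|)^{1-k} for all x ∈ ℝ^N. -/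
open MeasureTheory ENNReal Filter

noncomputable section

section AuxLemmas
open Metric Set
open scoped Pointwise

variable {n : ℕ}

private lemma div_rpow' {x y : ℝ} (hx : 0 ≤ x) (hy : 0 ≤ y) (z : ℝ) :
    (x / y) ^ z = x ^ z * y ^ (-z) := by
  rw [Real.div_rpow hx hy, div_eq_mul_inv, Real.rpow_neg hy]

private lemma rpow_anti {c d a : ℝ} (ha : 0 ≤ a) (h : c ≤ d) :
    ENNReal.ofReal d ^ (-a) ≤ ENNReal.ofReal c ^ (-a) := by
  rw [ENNReal.rpow_neg, ENNReal.rpow_neg]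
  exact ENNReal.inv_le_inv.mpr (ENNReal.rpow_le_rpow (ENNReal.ofReal_le_ofReal h) ha)

private lemma meas_ker (a : ℝ) :
    Measurable fun z : EuclideanSpace ℝ (Fin n) => ENNReal.ofReal ‖z‖ ^ (-a) :=
  (measurable_norm.ennreal_ofReal).pow_const _

private lemma lintegral_smul_set (a r : ℝ) (hr : 0 < r) (s : Set (EuclideanSpace ℝ (Fin n)))
    (hs : MeasurableSet s) :
    ∫⁻ z in r • s, ENNReal.ofReal ‖z‖ ^ (-a) =
      ENNReal.ofReal (r ^ ((n : ℝ) - a)) * ∫⁻ z in s, ENNReal.ofReal ‖z‖ ^ (-a) := by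
  have hf := meas_ker (n := n) a
  set f : EuclideanSpace ℝ (Fin n) → ℝ≥0∞ := fun z => ENNReal.ofReal ‖z‖ ^ (-a) with hfdef
  have hg : Measurable ((r • s).indicator f) := hf.indicator (hs.const_smul₀ r)
  have hind : ∀ w, (r • s).indicator f (r • w)
      = ENNReal.ofReal r ^ (-a) * s.indicator f w := by
    intro w
    by_cases hw : w ∈ s
    · rw [Set.indicator_of_mem ((smul_mem_smul_set_iff₀ hr.ne' s w).mpr hw),
        Set.indicator_of_mem hw, hfdef]
      simp only
      rw [norm_smul, Real.norm_eq_abs, abs_of_pos hr, ENNReal.ofReal_mul hr.le,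
        ENNReal.mul_rpow_of_ne_top ENNReal.ofReal_ne_top ENNReal.ofReal_ne_top]
    · rw [Set.indicator_of_notMem (fun hc => hw ((smul_mem_smul_set_iff₀ hr.ne' s w).mp hc)),
        Set.indicator_of_notMem hw, mul_zero]
  have hmap := Measure.map_addHaar_smul (volume : Measure (EuclideanSpace ℝ (Fin n))) hr.ne'
  have key : ∫⁻ w, (r • s).indicator f (r • w) =
      ENNReal.ofReal |(r ^ Module.finrank ℝ (EuclideanSpace ℝ (Fin n)))⁻¹| *
        ∫⁻ z, (r • s).indicator f z := by
    rw [← lintegral_map hg (measurable_const_smul r), hmap, lintegral_smul_measure, smul_eq_mul]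
  simp only [hind] at key
  rw [lintegral_const_mul' _ _ (by simp only [ne_eq, ENNReal.rpow_eq_top_iff, ENNReal.ofReal_eq_zero, ENNReal.ofReal_ne_top, false_and, or_false, not_and, not_lt]; exact fun h => absurd h hr.not_ge)] at key
  rw [lintegral_indicator hs, lintegral_indicator (hs.const_smul₀ r)] at key
  have hrn : (0:ℝ) < r ^ Module.finrank ℝ (EuclideanSpace ℝ (Fin n)) := pow_pos hr _
  have hc : ENNReal.ofReal |(r ^ Module.finrank ℝ (EuclideanSpace ℝ (Fin n)))⁻¹|
      = (ENNReal.ofReal (r ^ Module.finrank ℝ (EuclideanSpace ℝ (Fin n))))⁻¹ := by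
    rw [abs_of_pos (by positivity), ENNReal.ofReal_inv_of_pos hrn]
  rw [hc] at key
  have hne : ENNReal.ofReal (r ^ Module.finrank ℝ (EuclideanSpace ℝ (Fin n))) ≠ 0 :=
    (ENNReal.ofReal_pos.mpr hrn).ne'
  have h2 : ∫⁻ z in r • s, f z =
      ENNReal.ofReal (r ^ Module.finrank ℝ (EuclideanSpace ℝ (Fin n))) *
        (ENNReal.ofReal r ^ (-a) * ∫⁻ z in s, f z) := by
    rw [key, ← mul_assoc, ENNReal.mul_inv_cancel hne ENNReal.ofReal_ne_top, one_mul]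
  rw [h2, ← mul_assoc]
  congr 1
  rw [finrank_euclideanSpace_fin, ENNReal.ofReal_rpow_of_pos hr,
    ← ENNReal.ofReal_mul (by positivity), ← Real.rpow_natCast r n, ← Real.rpow_add hr,
    sub_eq_add_neg]


private lemma lintegral_ball_eq (a r : ℝ) (hr : 0 < r) :
    ∫⁻ z in ball (0 : EuclideanSpace ℝ (Fin n)) r, ENNReal.ofReal ‖z‖ ^ (-a) =
      ENNReal.ofReal (r ^ ((n : ℝ) - a)) *
        ∫⁻ z in ball (0 : EuclideanSpace ℝ (Fin n)) 1, ENNReal.ofReal ‖z‖ ^ (-a) := by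
  rw [← lintegral_smul_set a r hr _ measurableSet_ball]
  congr 1
  rw [_root_.smul_ball hr.ne', smul_zero, Real.norm_eq_abs, abs_of_pos hr, mul_one]

private lemma lintegral_compl_ball_eq (a r : ℝ) (hr : 0 < r) :
    ∫⁻ z in (ball (0 : EuclideanSpace ℝ (Fin n)) r)ᶜ, ENNReal.ofReal ‖z‖ ^ (-a) =
      ENNReal.ofReal (r ^ ((n : ℝ) - a)) *
        ∫⁻ z in (ball (0 : EuclideanSpace ℝ (Fin n)) 1)ᶜ, ENNReal.ofReal ‖z‖ ^ (-a) := by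
  rw [← lintegral_smul_set a r hr _ measurableSet_ball.compl]
  congr 1
  have hbij : Function.Bijective (fun w : EuclideanSpace ℝ (Fin n) => r • w) :=
    (Homeomorph.smulOfNeZero r hr.ne').bijective
  have : r • (ball (0 : EuclideanSpace ℝ (Fin n)) 1)ᶜ
      = (r • ball (0 : EuclideanSpace ℝ (Fin n)) 1)ᶜ := by
    rw [← Set.image_smul, ← Set.image_smul, Set.image_compl_eq hbij]
  rw [this, _root_.smul_ball hr.ne', smul_zero, Real.norm_eq_abs, abs_of_pos hr, mul_one]

private lemma lintegral_shift_ball (a r : ℝ) (p : EuclideanSpace ℝ (Fin n)) :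
    ∫⁻ y in ball p r, ENNReal.ofReal ‖p - y‖ ^ (-a) =
      ∫⁻ z in ball (0 : EuclideanSpace ℝ (Fin n)) r, ENNReal.ofReal ‖z‖ ^ (-a) := by
  have hf : Measurable fun y : EuclideanSpace ℝ (Fin n) => ENNReal.ofReal ‖p - y‖ ^ (-a) :=
    ((measurable_const.sub measurable_id).norm.ennreal_ofReal).pow_const _
  have hmp : MeasurePreserving (fun z : EuclideanSpace ℝ (Fin n) => p - z) volume volume :=
    Measure.measurePreserving_sub_left volume p
  have hg : Measurable ((ball p r).indicator
      fun y : EuclideanSpace ℝ (Fin n) => ENNReal.ofReal ‖p - y‖ ^ (-a)) :=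
    hf.indicator measurableSet_ball
  have key := hmp.lintegral_comp hg
  rw [lintegral_indicator measurableSet_ball] at key
  rw [← key]
  have : ∀ z : EuclideanSpace ℝ (Fin n), (ball p r).indicator
      (fun y => ENNReal.ofReal ‖p - y‖ ^ (-a)) (p - z)
      = (ball (0 : EuclideanSpace ℝ (Fin n)) r).indicator
          (fun z => ENNReal.ofReal ‖z‖ ^ (-a)) z := by
    intro z
    by_cases hz : z ∈ ball (0 : EuclideanSpace ℝ (Fin n)) r
    · rw [Set.indicator_of_mem hz, Set.indicator_of_mem, _root_.sub_sub_cancel]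
      rw [mem_ball, dist_eq_norm, sub_sub_cancel_left, norm_neg]
      simpa [mem_ball, dist_zero_right] using hz
    · rw [Set.indicator_of_notMem hz, Set.indicator_of_notMem]
      intro hc
      apply hz
      rw [mem_ball, dist_eq_norm, sub_sub_cancel_left, norm_neg] at hc
      simpa [mem_ball, dist_zero_right] using hc
  simp only [this]
  rw [lintegral_indicator measurableSet_ball]

private lemma phi_lt_top (a : ℝ) (ha : 0 ≤ a) (han : a < n) :
    (∫⁻ z in ball (0 : EuclideanSpace ℝ (Fin n)) 1, ENNReal.ofReal ‖z‖ ^ (-a)) < ⊤ := by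
  have hn : 0 < n := by exact_mod_cast ha.trans_lt han
  haveI : Nonempty (Fin n) := ⟨⟨0, hn⟩⟩
  haveI : Nontrivial (EuclideanSpace ℝ (Fin n)) := inferInstance
  set E := EuclideanSpace ℝ (Fin n)
  set V := volume (ball (0 : E) 1) with hV
  have hVfin : V < ⊤ := measure_ball_lt_top
  set A : ℕ → Set E := fun j => ball 0 ((1/2 : ℝ) ^ j) \ ball 0 ((1/2 : ℝ) ^ (j+1)) with hA
  have cover : ball (0 : E) 1 ⊆ {0} ∪ ⋃ j, A j := by
    intro z hz
    rcases eq_or_ne z 0 with rfl | hz0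
    · exact Or.inl rfl
    · refine Or.inr ?_
      have ht0 : 0 < ‖z‖ := norm_pos_iff.mpr hz0
      have ht1 : ‖z‖ < 1 := by simpa [mem_ball, dist_zero_right] using hz
      obtain ⟨m, hm⟩ := exists_pow_lt_of_lt_one ht0 (by norm_num : (1/2 : ℝ) < 1)
      have hP : ∃ j, ((1:ℝ)/2) ^ (j+1) ≤ ‖z‖ :=
        ⟨m, le_of_lt (lt_of_le_of_lt (pow_le_pow_of_le_one (by norm_num) (by norm_num)
          (Nat.le_succ m)) hm)⟩
      classical
      refine Set.mem_iUnion.mpr ⟨Nat.find hP, ?_, ?_⟩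
      · rw [mem_ball_zero_iff]
        rcases Nat.eq_zero_or_pos (Nat.find hP) with hj | hj
        · rw [hj, pow_zero]; exact ht1
        · have hmin := Nat.find_min hP (Nat.sub_lt hj one_pos)
          have heq : Nat.find hP - 1 + 1 = Nat.find hP := by omega
          rw [heq] at hmin
          exact not_le.mp hmin
      · rw [mem_ball_zero_iff]
        exact not_lt.mpr (Nat.find_spec hP)
  have step1 : (∫⁻ z in ball (0 : E) 1, ENNReal.ofReal ‖z‖ ^ (-a))
      ≤ ∑' j, ∫⁻ z in A j, ENNReal.ofReal ‖z‖ ^ (-a) := by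
    calc (∫⁻ z in ball (0 : E) 1, ENNReal.ofReal ‖z‖ ^ (-a))
        ≤ ∫⁻ z in ({0} ∪ ⋃ j, A j : Set E), ENNReal.ofReal ‖z‖ ^ (-a) :=
          lintegral_mono_set cover
      _ ≤ (∫⁻ z in ({0} : Set E), ENNReal.ofReal ‖z‖ ^ (-a))
          + ∫⁻ z in (⋃ j, A j), ENNReal.ofReal ‖z‖ ^ (-a) := lintegral_union_le _ _ _
      _ ≤ 0 + ∑' j, ∫⁻ z in A j, ENNReal.ofReal ‖z‖ ^ (-a) := by
          gcongr
          · rw [Measure.restrict_eq_zero.mpr (measure_singleton 0), lintegral_zero_measure]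
          · exact lintegral_iUnion_le _ _
      _ = _ := by rw [zero_add]
  set q : ℝ := (1/2 : ℝ) ^ ((n : ℝ) - a) with hq
  have hq0 : 0 < q := Real.rpow_pos_of_pos (by norm_num) _
  have hq1 : q < 1 := Real.rpow_lt_one (by norm_num) (by norm_num) (by linarith)
  have step2 : ∀ j : ℕ, (∫⁻ z in A j, ENNReal.ofReal ‖z‖ ^ (-a))
      ≤ ENNReal.ofReal (2 ^ a) * V * ENNReal.ofReal q ^ j := by
    intro j
    have hb : ∀ z ∈ A j, ENNReal.ofReal ‖z‖ ^ (-a)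
        ≤ ENNReal.ofReal (((1/2 : ℝ) ^ (j+1) : ℝ) ^ (-a)) := by
      intro z hz
      have h1 : ((1/2 : ℝ)) ^ (j+1) ≤ ‖z‖ := by
        have := hz.2
        rw [mem_ball_zero_iff] at this
        exact not_lt.mp this
      have hpos : (0:ℝ) < (1/2 : ℝ) ^ (j+1) := by positivity
      calc ENNReal.ofReal ‖z‖ ^ (-a) ≤ ENNReal.ofReal ((1/2 : ℝ) ^ (j+1)) ^ (-a) := by
            rw [ENNReal.rpow_neg, ENNReal.rpow_neg]
            exact ENNReal.inv_le_inv.mpr (ENNReal.rpow_le_rpow (ENNReal.ofReal_le_ofReal h1) ha)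
        _ = ENNReal.ofReal (((1/2 : ℝ) ^ (j+1) : ℝ) ^ (-a)) :=
            ENNReal.ofReal_rpow_of_pos hpos
    calc (∫⁻ z in A j, ENNReal.ofReal ‖z‖ ^ (-a))
        ≤ ∫⁻ _ in A j, ENNReal.ofReal (((1/2 : ℝ) ^ (j+1) : ℝ) ^ (-a)) :=
          setLIntegral_mono measurable_const hb
      _ = ENNReal.ofReal (((1/2 : ℝ) ^ (j+1) : ℝ) ^ (-a)) * volume (A j) := by
          rw [setLIntegral_const]
      _ ≤ ENNReal.ofReal (((1/2 : ℝ) ^ (j+1) : ℝ) ^ (-a)) * volume (ball (0:E) ((1/2:ℝ)^j)) := by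
          gcongr
          exact diff_subset
      _ = ENNReal.ofReal (((1/2 : ℝ) ^ (j+1) : ℝ) ^ (-a)) *
            (ENNReal.ofReal (((1/2:ℝ)^j) ^ Module.finrank ℝ E) * V) := by
          rw [Measure.addHaar_ball volume 0 (by positivity)]
      _ = ENNReal.ofReal (2 ^ a) * V * ENNReal.ofReal q ^ j := by
          rw [← mul_assoc, ← ENNReal.ofReal_mul (by positivity)]
          have hhalf : (0:ℝ) < 1/2 := by norm_num
          have hreal : ((1/2:ℝ)^(j+1))^(-a) * ((1/2:ℝ)^j)^(Module.finrank ℝ E) = 2^a * q^j := by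
            rw [finrank_euclideanSpace_fin]
            have l1 : (((1/2:ℝ)^(j+1))^(-a) : ℝ) = (1/2:ℝ) ^ ((((j+1:ℕ)):ℝ) * (-a)) := by
              rw [← Real.rpow_natCast (1/2:ℝ) (j+1), ← Real.rpow_mul hhalf.le]
            have l2 : ((((1/2:ℝ)^j : ℝ)) ^ (n:ℕ) : ℝ) = (1/2:ℝ) ^ ((j:ℝ) * (n:ℝ)) := by
              rw [← Real.rpow_natCast ((1/2:ℝ)^j) n, ← Real.rpow_natCast (1/2:ℝ) j,
                ← Real.rpow_mul hhalf.le]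
            have l3 : q ^ j = (1/2:ℝ) ^ (((n:ℝ) - a) * (j:ℝ)) := by
              rw [hq, ← Real.rpow_natCast ((1/2:ℝ)^((n:ℝ)-a)) j, ← Real.rpow_mul hhalf.le]
            have l4 : (2:ℝ)^a = (1/2:ℝ) ^ (-a) := by
              rw [one_div, Real.inv_rpow (by norm_num : (0:ℝ) ≤ 2),
                ← Real.rpow_neg (by norm_num : (0:ℝ) ≤ 2), neg_neg]
            rw [l1, l2, l3, l4, ← Real.rpow_add hhalf, ← Real.rpow_add hhalf]
            congr 1
            push_cast
            ring
          rw [hreal, ENNReal.ofReal_mul (by positivity), ENNReal.ofReal_pow hq0.le]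
          ring

  have step3 : (∑' j, ∫⁻ z in A j, ENNReal.ofReal ‖z‖ ^ (-a))
      ≤ ENNReal.ofReal (2 ^ a) * V * (1 - ENNReal.ofReal q)⁻¹ := by
    calc (∑' j, ∫⁻ z in A j, ENNReal.ofReal ‖z‖ ^ (-a))
        ≤ ∑' j, ENNReal.ofReal (2 ^ a) * V * ENNReal.ofReal q ^ j :=
          ENNReal.tsum_le_tsum step2
      _ = ENNReal.ofReal (2 ^ a) * V * ∑' j, ENNReal.ofReal q ^ j := ENNReal.tsum_mul_left
      _ = ENNReal.ofReal (2 ^ a) * V * (1 - ENNReal.ofReal q)⁻¹ := by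
          rw [ENNReal.tsum_geometric]
  refine lt_of_le_of_lt (le_trans step1 step3) ?_
  have h1 : ENNReal.ofReal q < 1 := by
    rw [← ENNReal.ofReal_one]
    exact ENNReal.ofReal_lt_ofReal_iff_of_nonneg hq0.le |>.mpr hq1
  have h2 : (1 - ENNReal.ofReal q)⁻¹ < ⊤ := by
    rw [ENNReal.inv_lt_top]
    exact tsub_pos_of_lt h1
  exact ENNReal.mul_lt_top (ENNReal.mul_lt_top ENNReal.ofReal_lt_top hVfin) h2

private lemma psi_lt_top (b : ℝ) (hb : (n:ℝ) < b) :
    (∫⁻ z in (ball (0 : EuclideanSpace ℝ (Fin n)) 1)ᶜ, ENNReal.ofReal ‖z‖ ^ (-b)) < ⊤ := by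
  have hb0 : 0 < b := lt_of_le_of_lt (Nat.cast_nonneg n) hb
  have hfin : (∫⁻ z : EuclideanSpace ℝ (Fin n), ENNReal.ofReal ((1 + ‖z‖) ^ (-b))) < ⊤ := by
    apply finite_integral_one_add_norm
    rwa [finrank_euclideanSpace_fin]
  have hptwise : ∀ z ∈ (ball (0 : EuclideanSpace ℝ (Fin n)) 1)ᶜ,
      ENNReal.ofReal ‖z‖ ^ (-b) ≤ ENNReal.ofReal (2 ^ b) * ENNReal.ofReal ((1 + ‖z‖) ^ (-b)) := by
    intro z hz
    have h1 : (1:ℝ) ≤ ‖z‖ := by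
      have := hz
      rw [mem_compl_iff, mem_ball_zero_iff, not_lt] at this
      exact this
    have h0 : (0:ℝ) < ‖z‖ := lt_of_lt_of_le one_pos h1
    rw [ENNReal.ofReal_rpow_of_pos h0, ← ENNReal.ofReal_mul (by positivity)]
    apply ENNReal.ofReal_le_ofReal
    have e1 : ‖z‖ ^ (-b) = (‖z‖⁻¹) ^ b := by
      rw [Real.rpow_neg (norm_nonneg z), ← Real.inv_rpow (norm_nonneg z)]
    have e2 : (2:ℝ) ^ b * (1 + ‖z‖) ^ (-b) = (2 / (1 + ‖z‖)) ^ b := by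
      rw [Real.rpow_neg (by positivity), div_eq_mul_inv,
        Real.mul_rpow (by norm_num) (by positivity), ← Real.inv_rpow (by positivity)]
    rw [e1, e2]
    apply Real.rpow_le_rpow (by positivity) _ hb0.le
    rw [inv_eq_one_div, div_le_div_iff₀ h0 (by positivity)]
    linarith
  calc (∫⁻ z in (ball (0 : EuclideanSpace ℝ (Fin n)) 1)ᶜ, ENNReal.ofReal ‖z‖ ^ (-b))
      ≤ ∫⁻ z in (ball (0 : EuclideanSpace ℝ (Fin n)) 1)ᶜ,
          ENNReal.ofReal (2 ^ b) * ENNReal.ofReal ((1 + ‖z‖) ^ (-b)) :=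
        setLIntegral_mono (measurable_const.mul
          (((measurable_norm.const_add 1).pow_const _).ennreal_ofReal)) hptwise
    _ = ENNReal.ofReal (2 ^ b) * ∫⁻ z in (ball (0 : EuclideanSpace ℝ (Fin n)) 1)ᶜ,
          ENNReal.ofReal ((1 + ‖z‖) ^ (-b)) := lintegral_const_mul' _ _ ENNReal.ofReal_ne_top
    _ ≤ ENNReal.ofReal (2 ^ b) * ∫⁻ z : EuclideanSpace ℝ (Fin n),
          ENNReal.ofReal ((1 + ‖z‖) ^ (-b)) := by
        gcongr
        exact Measure.restrict_le_self
    _ < ⊤ := ENNReal.mul_lt_top ENNReal.ofReal_lt_top hfin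

def pr {n : ℕ} (x : EuclideanSpace ℝ (Fin (n+1))) : EuclideanSpace ℝ (Fin n) :=
  (WithLp.equiv 2 (Fin n → ℝ)).symm fun i => x (Fin.castSucc i)

variable {n : ℕ}

lemma up_castSucc (y' : EuclideanSpace ℝ (Fin n)) (t : ℝ) (i : Fin n) :
    up (n+1) y' t (Fin.castSucc i) = y' i := by
  simp only [up, WithLp.equiv_symm_apply, PiLp.toLp_apply, Fin.coe_castSucc, Nat.add_sub_cancel]
  rw [dif_pos i.isLt]
  simp

lemma up_last (y' : EuclideanSpace ℝ (Fin n)) (t : ℝ) :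
    up (n+1) y' t (Fin.last n) = t := by
  simp only [up, WithLp.equiv_symm_apply, PiLp.toLp_apply, Fin.val_last, Nat.add_sub_cancel]
  rw [dif_neg (by omega)]

lemma pr_apply (x : EuclideanSpace ℝ (Fin (n+1))) (i : Fin n) :
    pr x i = x (Fin.castSucc i) := rfl

lemma norm_up (y' : EuclideanSpace ℝ (Fin n)) : ‖up (n+1) y' 0‖ = ‖y'‖ := by
  rw [EuclideanSpace.norm_eq, EuclideanSpace.norm_eq]
  congr 1
  rw [Fin.sum_univ_castSucc]
  simp [up_castSucc, up_last]

lemma norm_pr_le (x : EuclideanSpace ℝ (Fin (n+1))) : ‖pr x‖ ≤ ‖x‖ := by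
  rw [EuclideanSpace.norm_eq, EuclideanSpace.norm_eq]
  apply Real.sqrt_le_sqrt
  rw [Fin.sum_univ_castSucc]
  have : ∑ i : Fin n, ‖pr x i‖ ^ 2 = ∑ i : Fin n, ‖x (Fin.castSucc i)‖ ^ 2 := by
    simp [pr_apply]
  rw [this]
  have h2 : (0:ℝ) ≤ ‖x (Fin.last n)‖ ^ 2 := sq_nonneg _
  linarith

lemma dist_proj_le (x : EuclideanSpace ℝ (Fin (n+1))) (y' : EuclideanSpace ℝ (Fin n)) :
    ‖pr x - y'‖ ≤ ‖x - up (n+1) y' 0‖ := by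
  rw [EuclideanSpace.norm_eq, EuclideanSpace.norm_eq]
  apply Real.sqrt_le_sqrt
  rw [Fin.sum_univ_castSucc]
  have : ∑ i : Fin n, ‖(pr x - y') i‖ ^ 2
      = ∑ i : Fin n, ‖(x - up (n+1) y' 0) (Fin.castSucc i)‖ ^ 2 := by
    apply Finset.sum_congr rfl
    intro i _
    congr 1
    rw [PiLp.sub_apply, PiLp.sub_apply, pr_apply, up_castSucc]
  rw [this]
  have h2 : (0:ℝ) ≤ ‖(x - up (n+1) y' 0) (Fin.last n)‖ ^ 2 := sq_nonneg _
  linarith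


end AuxLemmas

set_option maxHeartbeats 1000000 in
/-- Lemma 2.6: if `1 < k < N-1` then there is `C₂ = C₂(N,k) > 0` with
`∫_{ℝ^{N-1}} |x-(y',0)|^{-(N-2)} (1+|y'|)^{-k} dy' ≤ C₂ (1+|x|)^{1-k}` for all `x ∈ ℝ^N`. -/
theorem integral_estimate_two
    (N : ℕ) (hN : 3 ≤ N) (k : ℝ) (hk1 : 1 < k) (hkN : k < (N : ℝ) - 1) :
    ∃ C > 0, ∀ x : EuclideanSpace ℝ (Fin N),
      (∫⁻ y', ENNReal.ofReal ‖x - up N y' 0‖ ^ ((2 : ℝ) - N) *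
          ENNReal.ofReal (1 + ‖y'‖) ^ (-k)) ≤
        ENNReal.ofReal (C * (1 + ‖x‖) ^ (1 - k)) := by
  obtain ⟨n, rfl⟩ : ∃ n, N = n + 1 := ⟨N - 1, by omega⟩
  have hn2 : 2 ≤ n := by omega
  have hkn : k < (n : ℝ) := by
    have : ((n + 1 : ℕ) : ℝ) - 1 = (n : ℝ) := by push_cast; ring
    rwa [this] at hkN
  have hk0 : (0:ℝ) ≤ k := by linarith
  set a : ℝ := (n : ℝ) - 1 with ha
  have ha0 : 0 ≤ a := by
    have : (2:ℝ) ≤ (n:ℝ) := by exact_mod_cast hn2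
    simp only [ha]; linarith
  have han : a < (n:ℝ) := by simp only [ha]; linarith
  have hak : (n:ℝ) < a + k := by simp only [ha]; linarith
  set Φa : ℝ≥0∞ := ∫⁻ z in Metric.ball (0 : EuclideanSpace ℝ (Fin n)) 1,
    ENNReal.ofReal ‖z‖ ^ (-a) with hΦa
  set Φk : ℝ≥0∞ := ∫⁻ z in Metric.ball (0 : EuclideanSpace ℝ (Fin n)) 1,
    ENNReal.ofReal ‖z‖ ^ (-k) with hΦk
  set Ψ : ℝ≥0∞ := ∫⁻ z in (Metric.ball (0 : EuclideanSpace ℝ (Fin n)) 1)ᶜ,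
    ENNReal.ofReal ‖z‖ ^ (-(a+k)) with hΨ
  have hΦa_top : Φa < ⊤ := phi_lt_top a ha0 han
  have hΦk_top : Φk < ⊤ := phi_lt_top k hk0 hkn
  have hΨ_top : Ψ < ⊤ := psi_lt_top (a+k) hak
  set Pa : ℝ := Φa.toReal with hPa
  set Pk : ℝ := Φk.toReal with hPk
  set Ps : ℝ := Ψ.toReal with hPs
  have hPa0 : 0 ≤ Pa := ENNReal.toReal_nonneg
  have hPk0 : 0 ≤ Pk := ENNReal.toReal_nonneg
  have hPs0 : 0 ≤ Ps := ENNReal.toReal_nonneg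
  have hΦa_eq : Φa = ENNReal.ofReal Pa := (ENNReal.ofReal_toReal hΦa_top.ne).symm
  have hΦk_eq : Φk = ENNReal.ofReal Pk := (ENNReal.ofReal_toReal hΦk_top.ne).symm
  have hΨ_eq : Ψ = ENNReal.ofReal Ps := (ENNReal.ofReal_toReal hΨ_top.ne).symm
  set c1 : ℝ := 2 ^ a * 2 ^ (1-k) * Ps with hc1
  set c2 : ℝ := 12 * 4 ^ (k-1) * Pa with hc2
  set c3 : ℝ := 4 ^ a * 2 ^ (k-(n:ℝ)) * Pk with hc3
  set c4 : ℝ := 3 * 2 ^ k * Pa with hc4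
  have hc1_0 : 0 ≤ c1 := by positivity
  have hc2_0 : 0 ≤ c2 := by positivity
  have hc3_0 : 0 ≤ c3 := by positivity
  have hc4_0 : 0 ≤ c4 := by positivity
  refine ⟨c1 + c2 + c3 + c4 + 1, by positivity, fun x => ?_⟩
  set C : ℝ := c1 + c2 + c3 + c4 + 1 with hC
  set R : ℝ := 1 + ‖x‖ with hR
  have hR1 : 1 ≤ R := by simp only [hR]; linarith [norm_nonneg x]
  have hR0 : 0 < R := by linarith
  have hxR : ‖x‖ = R - 1 := by simp only [hR]; ring
  set p : EuclideanSpace ℝ (Fin n) := pr x with hp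
  have hpx : ‖p‖ ≤ R - 1 := by rw [← hxR]; exact norm_pr_le x
  have hexp : ((2 : ℝ) - ((n + 1 : ℕ) : ℝ)) = -a := by simp only [ha]; push_cast; ring
  have hRk0 : (0:ℝ) ≤ R ^ (1-k) := Real.rpow_nonneg hR0.le _
  -- the integrand as a function on E^n
  set f : EuclideanSpace ℝ (Fin n) → ℝ≥0∞ := fun y' =>
    ENNReal.ofReal ‖x - up (n+1) y' 0‖ ^ (-a) * ENNReal.ofReal (1 + ‖y'‖) ^ (-k) with hf
  have hgoal : (∫⁻ y', ENNReal.ofReal ‖x - up (n+1) y' 0‖ ^ ((2 : ℝ) - ((n+1 : ℕ):ℝ)) *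
      ENNReal.ofReal (1 + ‖y'‖) ^ (-k)) = ∫⁻ y', f y' := by
    simp only [hexp, hf]
    rfl
  rw [hgoal]
  -- split into ball of radius 2R and its complement
  rw [← lintegral_add_compl f (measurableSet_ball
    (x := (0 : EuclideanSpace ℝ (Fin n))) (ε := 2*R))]
  -- outer estimate
  have houter : (∫⁻ y' in (Metric.ball (0 : EuclideanSpace ℝ (Fin n)) (2*R))ᶜ, f y')
      ≤ ENNReal.ofReal (c1 * R ^ (1-k)) := by
    have hpt : ∀ y' ∈ (Metric.ball (0 : EuclideanSpace ℝ (Fin n)) (2*R))ᶜ,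
        f y' ≤ ENNReal.ofReal (2 ^ a) * ENNReal.ofReal ‖y'‖ ^ (-(a+k)) := by
      intro y' hy'
      have hy : 2*R ≤ ‖y'‖ := by
        rw [Set.mem_compl_iff, Metric.mem_ball, dist_zero_right, not_lt] at hy'
        exact hy'
      have hy0 : 0 < ‖y'‖ := by linarith
      have hd : ‖y'‖/2 ≤ ‖x - up (n+1) y' 0‖ := by
        have h1 : ‖up (n+1) y' 0‖ - ‖x‖ ≤ ‖x - up (n+1) y' 0‖ := by
          rw [norm_sub_rev]; exact norm_sub_norm_le _ _
        rw [norm_up] at h1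
        rw [hxR] at h1
        linarith
      have step : f y' ≤ ENNReal.ofReal (‖y'‖/2) ^ (-a) * ENNReal.ofReal ‖y'‖ ^ (-k) :=
        mul_le_mul' (rpow_anti ha0 hd) (rpow_anti hk0 (by linarith))
      refine step.trans (le_of_eq ?_)
      have e1 : ENNReal.ofReal (‖y'‖/2) ^ (-a)
          = ENNReal.ofReal (2 ^ a) * ENNReal.ofReal ‖y'‖ ^ (-a) := by
        rw [ENNReal.ofReal_rpow_of_pos (by positivity),
          div_rpow' (norm_nonneg y') (by norm_num : (0:ℝ) ≤ 2), neg_neg,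
          ENNReal.ofReal_mul (by positivity), ENNReal.ofReal_rpow_of_pos hy0, mul_comm]
      rw [e1, mul_assoc]
      congr 1
      rw [neg_add, ENNReal.rpow_add (-a) (-k) (ENNReal.ofReal_pos.mpr hy0).ne' ENNReal.ofReal_ne_top]
    calc (∫⁻ y' in (Metric.ball (0 : EuclideanSpace ℝ (Fin n)) (2*R))ᶜ, f y')
        ≤ ∫⁻ y' in (Metric.ball (0 : EuclideanSpace ℝ (Fin n)) (2*R))ᶜ,
            ENNReal.ofReal (2 ^ a) * ENNReal.ofReal ‖y'‖ ^ (-(a+k)) :=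
          setLIntegral_mono ((meas_ker (a+k)).const_mul _) hpt
      _ = ENNReal.ofReal (2 ^ a) *
            ∫⁻ y' in (Metric.ball (0 : EuclideanSpace ℝ (Fin n)) (2*R))ᶜ,
              ENNReal.ofReal ‖y'‖ ^ (-(a+k)) :=
          lintegral_const_mul' _ _ ENNReal.ofReal_ne_top
      _ = ENNReal.ofReal (2 ^ a) * (ENNReal.ofReal ((2*R) ^ ((n:ℝ) - (a+k))) * Ψ) := by
          rw [lintegral_compl_ball_eq (a+k) (2*R) (by positivity)]
      _ ≤ ENNReal.ofReal (c1 * R ^ (1-k)) := by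
          have hnak : (n:ℝ) - (a+k) = 1 - k := by simp only [ha]; ring
          rw [hnak, hΨ_eq, ← ENNReal.ofReal_mul (by positivity),
            ← ENNReal.ofReal_mul (by positivity)]
          apply ENNReal.ofReal_le_ofReal
          rw [Real.mul_rpow (by norm_num : (0:ℝ) ≤ 2) hR0.le]
          simp only [hc1]; nlinarith [Real.rpow_nonneg hR0.le (1-k),
            Real.rpow_pos_of_pos (by norm_num : (0:ℝ) < 2) a,
            Real.rpow_pos_of_pos (by norm_num : (0:ℝ) < 2) (1-k)]
  -- inner estimates
  have hball_sub : Metric.ball (0 : EuclideanSpace ℝ (Fin n)) (2*R) ⊆ Metric.ball p (3*R) := by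
    intro y' hy'
    rw [mem_ball_zero_iff] at hy'
    rw [Metric.mem_ball, dist_eq_norm]
    calc ‖y' - p‖ ≤ ‖y'‖ + ‖p‖ := norm_sub_le _ _
      _ < 3*R := by linarith
  have hinner : (∫⁻ y' in Metric.ball (0 : EuclideanSpace ℝ (Fin n)) (2*R), f y')
      ≤ ENNReal.ofReal ((c2 + c3 + c4) * R ^ (1-k)) := by
    rcases le_or_gt R 4 with hR4 | hR4
    · -- R ≤ 4 : use the singularity bound on the whole ball
      have hpt : ∀ y' ∈ Metric.ball (0 : EuclideanSpace ℝ (Fin n)) (2*R),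
          f y' ≤ ENNReal.ofReal ‖p - y'‖ ^ (-a) := by
        intro y' _
        have h1 : ENNReal.ofReal ‖x - up (n+1) y' 0‖ ^ (-a)
            ≤ ENNReal.ofReal ‖p - y'‖ ^ (-a) := rpow_anti ha0 (dist_proj_le x y')
        have h2 : ENNReal.ofReal (1 + ‖y'‖) ^ (-k) ≤ 1 := by
          rw [ENNReal.rpow_neg]
          apply ENNReal.inv_le_one.mpr
          calc (1:ℝ≥0∞) = 1 ^ k := (ENNReal.one_rpow k).symm
            _ ≤ ENNReal.ofReal (1 + ‖y'‖) ^ k :=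
              ENNReal.rpow_le_rpow (by rw [ENNReal.one_le_ofReal]; linarith [norm_nonneg y']) hk0
        calc f y' ≤ ENNReal.ofReal ‖p - y'‖ ^ (-a) * 1 := mul_le_mul' h1 h2
          _ = ENNReal.ofReal ‖p - y'‖ ^ (-a) := mul_one _
      calc (∫⁻ y' in Metric.ball (0 : EuclideanSpace ℝ (Fin n)) (2*R), f y')
          ≤ ∫⁻ y' in Metric.ball (0 : EuclideanSpace ℝ (Fin n)) (2*R),
              ENNReal.ofReal ‖p - y'‖ ^ (-a) :=
            setLIntegral_mono (((measurable_const.sub measurable_id).norm.ennreal_ofReal).pow_const _) hpt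
        _ ≤ ∫⁻ y' in Metric.ball p (3*R), ENNReal.ofReal ‖p - y'‖ ^ (-a) :=
            lintegral_mono_set hball_sub
        _ = ∫⁻ z in Metric.ball (0 : EuclideanSpace ℝ (Fin n)) (3*R),
              ENNReal.ofReal ‖z‖ ^ (-a) := lintegral_shift_ball a (3*R) p
        _ = ENNReal.ofReal ((3*R) ^ ((n:ℝ) - a)) * Φa :=
            lintegral_ball_eq a (3*R) (by positivity)
        _ ≤ ENNReal.ofReal ((c2 + c3 + c4) * R ^ (1-k)) := by
            have hna : (n:ℝ) - a = 1 := by simp only [ha]; ring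
            rw [hna, Real.rpow_one, hΦa_eq, ← ENNReal.ofReal_mul (by positivity)]
            apply ENNReal.ofReal_le_ofReal
            have h41 : (1:ℝ) ≤ 4 ^ (k-1) * R ^ (1-k) := by
              have e : R ^ (1-k) = (R ^ (k-1))⁻¹ := by
                rw [show (1-k : ℝ) = -(k-1) by ring, Real.rpow_neg hR0.le]
              have hle : R ^ (k-1) ≤ 4 ^ (k-1) :=
                Real.rpow_le_rpow hR0.le hR4 (by linarith)
              have hpos : (0:ℝ) < R ^ (k-1) := Real.rpow_pos_of_pos hR0 _
              rw [e, ← div_eq_mul_inv, le_div_iff₀ hpos, one_mul]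
              exact hle
            have h3R : 3 * R * Pa ≤ c2 * R ^ (1-k) := by
              simp only [hc2]
              nlinarith [mul_le_mul_of_nonneg_left h41 (mul_nonneg (by norm_num : (0:ℝ) ≤ 12) hPa0)]
            nlinarith [mul_nonneg hc3_0 hRk0, mul_nonneg hc4_0 hRk0]
    · -- R > 4 : split the ball further
      have hsplit2 : Metric.ball (0 : EuclideanSpace ℝ (Fin n)) (2*R)
          ⊆ Metric.ball (0 : EuclideanSpace ℝ (Fin n)) (R/2)
            ∪ (Metric.ball (0 : EuclideanSpace ℝ (Fin n)) (2*R)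
                \ Metric.ball (0 : EuclideanSpace ℝ (Fin n)) (R/2)) := by
        intro z hz
        by_cases h : z ∈ Metric.ball (0 : EuclideanSpace ℝ (Fin n)) (R/2)
        · exact Or.inl h
        · exact Or.inr ⟨hz, h⟩
      have hA : (∫⁻ y' in Metric.ball (0 : EuclideanSpace ℝ (Fin n)) (R/2), f y')
          ≤ ENNReal.ofReal (c3 * R ^ (1-k)) := by
        have hpt : ∀ y' ∈ Metric.ball (0 : EuclideanSpace ℝ (Fin n)) (R/2),
            f y' ≤ ENNReal.ofReal ((R/4) ^ (-a)) * ENNReal.ofReal ‖y'‖ ^ (-k) := by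
          intro y' hy'
          rw [mem_ball_zero_iff] at hy'
          have hd : R/4 ≤ ‖x - up (n+1) y' 0‖ := by
            have h1 : ‖x‖ - ‖up (n+1) y' 0‖ ≤ ‖x - up (n+1) y' 0‖ := norm_sub_norm_le _ _
            rw [norm_up, hxR] at h1
            linarith
          have step : f y' ≤ ENNReal.ofReal (R/4) ^ (-a) * ENNReal.ofReal ‖y'‖ ^ (-k) :=
            mul_le_mul' (rpow_anti ha0 hd) (rpow_anti hk0 (by linarith))
          rwa [ENNReal.ofReal_rpow_of_pos (by positivity)] at step
        calc (∫⁻ y' in Metric.ball (0 : EuclideanSpace ℝ (Fin n)) (R/2), f y')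
            ≤ ∫⁻ y' in Metric.ball (0 : EuclideanSpace ℝ (Fin n)) (R/2),
                ENNReal.ofReal ((R/4) ^ (-a)) * ENNReal.ofReal ‖y'‖ ^ (-k) :=
              setLIntegral_mono ((meas_ker k).const_mul _) hpt
          _ = ENNReal.ofReal ((R/4) ^ (-a)) *
                ∫⁻ y' in Metric.ball (0 : EuclideanSpace ℝ (Fin n)) (R/2),
                  ENNReal.ofReal ‖y'‖ ^ (-k) :=
              lintegral_const_mul' _ _ ENNReal.ofReal_ne_top
          _ = ENNReal.ofReal ((R/4) ^ (-a)) *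
                (ENNReal.ofReal ((R/2) ^ ((n:ℝ) - k)) * Φk) := by
              rw [lintegral_ball_eq k (R/2) (by positivity)]
          _ ≤ ENNReal.ofReal (c3 * R ^ (1-k)) := by
              rw [hΦk_eq, ← ENNReal.ofReal_mul (by positivity),
                ← ENNReal.ofReal_mul (by positivity)]
              apply ENNReal.ofReal_le_ofReal
              apply le_of_eq
              rw [div_rpow' hR0.le (by norm_num : (0:ℝ) ≤ 4), neg_neg,
                div_rpow' hR0.le (by norm_num : (0:ℝ) ≤ 2),
                show (-((n:ℝ) - k)) = k - (n:ℝ) by ring]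
              simp only [hc3]
              rw [show (1-k : ℝ) = -a + ((n:ℝ) - k) by simp only [ha]; ring,
                Real.rpow_add hR0]
              ring
      have hC4 : (∫⁻ y' in (Metric.ball (0 : EuclideanSpace ℝ (Fin n)) (2*R)
            \ Metric.ball (0 : EuclideanSpace ℝ (Fin n)) (R/2)), f y')
          ≤ ENNReal.ofReal (c4 * R ^ (1-k)) := by
        have hpt : ∀ y' ∈ (Metric.ball (0 : EuclideanSpace ℝ (Fin n)) (2*R)
              \ Metric.ball (0 : EuclideanSpace ℝ (Fin n)) (R/2)),
            f y' ≤ ENNReal.ofReal ((R/2) ^ (-k)) * ENNReal.ofReal ‖p - y'‖ ^ (-a) := by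
          intro y' hy'
          have hy2 : R/2 ≤ ‖y'‖ := by
            have := hy'.2
            rw [mem_ball_zero_iff, not_lt] at this
            exact this
          have h1 : ENNReal.ofReal ‖x - up (n+1) y' 0‖ ^ (-a)
              ≤ ENNReal.ofReal ‖p - y'‖ ^ (-a) := rpow_anti ha0 (dist_proj_le x y')
          have h2 : ENNReal.ofReal (1 + ‖y'‖) ^ (-k)
              ≤ ENNReal.ofReal ((R/2) ^ (-k)) := by
            rw [← ENNReal.ofReal_rpow_of_pos (by positivity)]
            exact rpow_anti hk0 (by linarith [norm_nonneg y'])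
          calc f y' ≤ ENNReal.ofReal ‖p - y'‖ ^ (-a) * ENNReal.ofReal ((R/2) ^ (-k)) :=
              mul_le_mul' h1 h2
            _ = ENNReal.ofReal ((R/2) ^ (-k)) * ENNReal.ofReal ‖p - y'‖ ^ (-a) := mul_comm _ _
        calc (∫⁻ y' in (Metric.ball (0 : EuclideanSpace ℝ (Fin n)) (2*R)
              \ Metric.ball (0 : EuclideanSpace ℝ (Fin n)) (R/2)), f y')
            ≤ ∫⁻ y' in (Metric.ball (0 : EuclideanSpace ℝ (Fin n)) (2*R)
                \ Metric.ball (0 : EuclideanSpace ℝ (Fin n)) (R/2)),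
                ENNReal.ofReal ((R/2) ^ (-k)) * ENNReal.ofReal ‖p - y'‖ ^ (-a) :=
              setLIntegral_mono
                ((((measurable_const.sub measurable_id).norm.ennreal_ofReal).pow_const _).const_mul _) hpt
          _ ≤ ∫⁻ y' in Metric.ball p (3*R),
                ENNReal.ofReal ((R/2) ^ (-k)) * ENNReal.ofReal ‖p - y'‖ ^ (-a) :=
              lintegral_mono_set (fun z hz => hball_sub hz.1)
          _ = ENNReal.ofReal ((R/2) ^ (-k)) *
                ∫⁻ y' in Metric.ball p (3*R), ENNReal.ofReal ‖p - y'‖ ^ (-a) :=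
              lintegral_const_mul' _ _ ENNReal.ofReal_ne_top
          _ = ENNReal.ofReal ((R/2) ^ (-k)) *
                (ENNReal.ofReal ((3*R) ^ ((n:ℝ) - a)) * Φa) := by
              rw [lintegral_shift_ball a (3*R) p, lintegral_ball_eq a (3*R) (by positivity)]
          _ ≤ ENNReal.ofReal (c4 * R ^ (1-k)) := by
              have hna : (n:ℝ) - a = 1 := by simp only [ha]; ring
              rw [hna, Real.rpow_one, hΦa_eq, ← ENNReal.ofReal_mul (by positivity),
                ← ENNReal.ofReal_mul (by positivity)]
              apply ENNReal.ofReal_le_ofReal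
              apply le_of_eq
              rw [div_rpow' hR0.le (by norm_num : (0:ℝ) ≤ 2)]
              simp only [hc4]
              rw [show (1-k : ℝ) = -k + 1 by ring, Real.rpow_add hR0, Real.rpow_one]
              ring
      calc (∫⁻ y' in Metric.ball (0 : EuclideanSpace ℝ (Fin n)) (2*R), f y')
          ≤ ∫⁻ y' in (Metric.ball (0 : EuclideanSpace ℝ (Fin n)) (R/2)
              ∪ (Metric.ball (0 : EuclideanSpace ℝ (Fin n)) (2*R)
                  \ Metric.ball (0 : EuclideanSpace ℝ (Fin n)) (R/2))), f y' :=
            lintegral_mono_set hsplit2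
        _ ≤ (∫⁻ y' in Metric.ball (0 : EuclideanSpace ℝ (Fin n)) (R/2), f y')
            + ∫⁻ y' in (Metric.ball (0 : EuclideanSpace ℝ (Fin n)) (2*R)
                \ Metric.ball (0 : EuclideanSpace ℝ (Fin n)) (R/2)), f y' :=
            lintegral_union_le _ _ _
        _ ≤ ENNReal.ofReal (c3 * R ^ (1-k)) + ENNReal.ofReal (c4 * R ^ (1-k)) :=
            add_le_add hA hC4
        _ ≤ ENNReal.ofReal ((c2 + c3 + c4) * R ^ (1-k)) := by
            rw [← ENNReal.ofReal_add (by positivity) (by positivity)]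
            apply ENNReal.ofReal_le_ofReal
            nlinarith [mul_nonneg hc2_0 hRk0]
  calc (∫⁻ y' in Metric.ball (0 : EuclideanSpace ℝ (Fin n)) (2*R), f y')
      + (∫⁻ y' in (Metric.ball (0 : EuclideanSpace ℝ (Fin n)) (2*R))ᶜ, f y')
      ≤ ENNReal.ofReal ((c2 + c3 + c4) * R ^ (1-k)) + ENNReal.ofReal (c1 * R ^ (1-k)) :=
        add_le_add hinner houter
    _ ≤ ENNReal.ofReal (C * R ^ (1-k)) := by
        rw [← ENNReal.ofReal_add (by positivity) (by positivity)]
        apply ENNReal.ofReal_le_ofReal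
        simp only [hC]
        nlinarith [hRk0]

end
end

section
/- Let N ≥ 3, 1 < k < N-1, p > 0 and c > 0. Let v : ℝ^{N-1} → [0,∞] be measurable with v > 0 a.e., v(x') < ∞ for a.e. x' ∈ ℝ^{N-1}, and v(x') ≥ c ∫_{ℝ^{N-1}} v(y')^p |x'-y'|^{-(k-1)} dy' for a.e. x' ∈ ℝ^{N-1}. Then v^p is integrable on the unit ball of ℝ^{N-1}, and there exists a constant C > 0 such that v(x') ≥ C |x'|^{1-k} for a.e. x' ∈ ℝ^{N-1} with |x'| > 1. -/
open MeasureTheory ENNReal Filter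

noncomputable section

/-- Lemma 3.1 (together with (3.5)): if `v : ℝ^{N-1} → [0,∞]` is measurable, a.e. positive
and finite, and satisfies `v(x') ≥ c ∫ v(y')^p |x'-y'|^{-(k-1)} dy'` a.e., then `v^p` is
integrable on the unit ball and there is `C > 0` with `v(x') ≥ C|x'|^{1-k}` for
a.e. `|x'| > 1`. -/
theorem lower_bound_lemma
    (N : ℕ) (hN : 3 ≤ N) (k p c : ℝ)
    (hk1 : 1 < k) (hkN : k < (N : ℝ) - 1) (hp : 0 < p) (hc : 0 < c)
    (v : EuclideanSpace ℝ (Fin (N - 1)) → ℝ≥0∞) (hv : Measurable v)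
    (hpos : ∀ᵐ x' ∂(volume : Measure (EuclideanSpace ℝ (Fin (N - 1)))), 0 < v x')
    (hfin : ∀ᵐ x' ∂(volume : Measure (EuclideanSpace ℝ (Fin (N - 1)))), v x' < ⊤)
    (hineq : ∀ᵐ x' ∂(volume : Measure (EuclideanSpace ℝ (Fin (N - 1)))),
      ENNReal.ofReal c * ∫⁻ y', v y' ^ p * ENNReal.ofReal ‖x' - y'‖ ^ (-(k - 1)) ≤ v x') :
    (∫⁻ y' in Metric.ball (0 : EuclideanSpace ℝ (Fin (N - 1))) 1, v y' ^ p) < ⊤ ∧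
      ∃ C > 0, ∀ᵐ x' ∂(volume : Measure (EuclideanSpace ℝ (Fin (N - 1)))),
        1 < ‖x'‖ → ENNReal.ofReal (C * ‖x'‖ ^ (1 - k)) ≤ v x' := by
  have hk0 : (0:ℝ) < k - 1 := by linarith
  have hanti : ∀ s t : ℝ≥0∞, s ≤ t → t ^ (-(k-1)) ≤ s ^ (-(k-1)) := by
    intro s t hst
    rw [ENNReal.rpow_neg, ENNReal.rpow_neg]
    exact ENNReal.inv_le_inv.mpr (ENNReal.rpow_le_rpow hst hk0.le)
  have hrpm : Measurable fun x : ℝ≥0∞ => x ^ (-(k-1)) :=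
    ENNReal.continuous_rpow_const.measurable
  have hmeas : Measurable fun y' => v y' ^ p :=
    (ENNReal.continuous_rpow_const.measurable).comp hv
  have hker : ∀ b : EuclideanSpace ℝ (Fin (N - 1)),
      Measurable fun y' => ENNReal.ofReal ‖b - y'‖ ^ (-(k-1)) := fun b =>
    hrpm.comp ((measurable_const.sub measurable_id).norm.ennreal_ofReal)
  -- pick a point where the inequality and finiteness hold
  obtain ⟨a, hafin, haineq⟩ := (hfin.and hineq).exists
  have hInt : (∫⁻ y', v y' ^ p * ENNReal.ofReal ‖a - y'‖ ^ (-(k-1))) < ⊤ := by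
    by_contra h
    rw [not_lt, top_le_iff] at h
    rw [h, ENNReal.mul_top (ENNReal.ofReal_pos.mpr hc).ne'] at haineq
    exact hafin.ne (top_le_iff.mp haineq)
  set Ma : ℝ≥0∞ := ENNReal.ofReal (‖a‖ + 1) with hMadef
  have hMa0 : Ma ≠ 0 := by
    simp only [hMadef, Ne, ENNReal.ofReal_eq_zero, not_le]
    positivity
  have hMatop : Ma ≠ ⊤ := ENNReal.ofReal_ne_top
  have claim1 : (∫⁻ y' in Metric.ball (0 : EuclideanSpace ℝ (Fin (N - 1))) 1, v y' ^ p) < ⊤ := by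
    have hpt : ∀ y' ∈ Metric.ball (0 : EuclideanSpace ℝ (Fin (N - 1))) 1,
        v y' ^ p ≤ (v y' ^ p * ENNReal.ofReal ‖a - y'‖ ^ (-(k-1))) * Ma ^ (k-1) := by
      intro y' hy'
      have hle : ENNReal.ofReal ‖a - y'‖ ≤ Ma := by
        apply ENNReal.ofReal_le_ofReal
        have : ‖a - y'‖ ≤ ‖a‖ + ‖y'‖ := norm_sub_le _ _
        have hy1 : ‖y'‖ < 1 := by simpa using hy'
        linarith
      have h1 : (1 : ℝ≥0∞) ≤ ENNReal.ofReal ‖a - y'‖ ^ (-(k-1)) * Ma ^ (k-1) := by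
        have : Ma ^ (-(k-1)) * Ma ^ (k-1) = 1 := by
          rw [← ENNReal.rpow_add _ _ hMa0 hMatop]; simp
        calc (1:ℝ≥0∞) = Ma ^ (-(k-1)) * Ma ^ (k-1) := this.symm
          _ ≤ _ := mul_le_mul_left (hanti _ _ hle) _
      calc v y' ^ p = v y' ^ p * 1 := (mul_one _).symm
        _ ≤ v y' ^ p * (ENNReal.ofReal ‖a - y'‖ ^ (-(k-1)) * Ma ^ (k-1)) :=
            mul_le_mul_right h1 _
        _ = _ := by ring
    calc (∫⁻ y' in Metric.ball (0 : EuclideanSpace ℝ (Fin (N - 1))) 1, v y' ^ p)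
        ≤ ∫⁻ y' in Metric.ball (0 : EuclideanSpace ℝ (Fin (N - 1))) 1,
            (v y' ^ p * ENNReal.ofReal ‖a - y'‖ ^ (-(k-1))) * Ma ^ (k-1) :=
          setLIntegral_mono ((hmeas.mul (hker a)).mul_const _) hpt
      _ = (∫⁻ y' in Metric.ball (0 : EuclideanSpace ℝ (Fin (N - 1))) 1,
            v y' ^ p * ENNReal.ofReal ‖a - y'‖ ^ (-(k-1))) * Ma ^ (k-1) :=
          lintegral_mul_const' _ _ (ENNReal.rpow_ne_top_of_nonneg hk0.le hMatop)
      _ ≤ (∫⁻ y', v y' ^ p * ENNReal.ofReal ‖a - y'‖ ^ (-(k-1))) * Ma ^ (k-1) :=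
          mul_le_mul_left (setLIntegral_le_lintegral _ _) _
      _ < ⊤ := ENNReal.mul_lt_top hInt (ENNReal.rpow_lt_top_of_nonneg hk0.le hMatop).lt_top
  refine ⟨claim1, ?_⟩
  set I := ∫⁻ y' in Metric.ball (0 : EuclideanSpace ℝ (Fin (N - 1))) 1, v y' ^ p with hIdef
  have hIpos : 0 < I := by
    rw [hIdef, lintegral_pos_iff_support hmeas]
    have hz : (volume.restrict (Metric.ball (0 : EuclideanSpace ℝ (Fin (N - 1))) 1))
        (Function.support fun y' => v y' ^ p)ᶜ = 0 := by
      have hsub : (Function.support fun y' => v y' ^ p)ᶜ ⊆ {y' | ¬ 0 < v y'} := by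
        intro y' hy'
        simp only [Function.mem_support, not_not, Set.mem_compl_iff] at hy'
        rw [ENNReal.rpow_eq_zero_iff] at hy'
        rcases hy' with ⟨h0, _⟩ | ⟨_, hneg⟩
        · simp [h0]
        · linarith
      refine measure_mono_null hsub ?_
      exact le_antisymm ((Measure.restrict_apply_le _ _).trans_eq (ae_iff.mp hpos))
        zero_le
    have huniv : (volume.restrict (Metric.ball (0 : EuclideanSpace ℝ (Fin (N - 1))) 1))
        (Function.support fun y' => v y' ^ p)
        = (volume.restrict (Metric.ball (0 : EuclideanSpace ℝ (Fin (N - 1))) 1)) Set.univ := by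
      rw [← measure_add_measure_compl (measurableSet_support hmeas), hz, add_zero]
    rw [huniv]
    simp only [Measure.restrict_apply MeasurableSet.univ, Set.univ_inter]
    exact Metric.measure_ball_pos _ _ one_pos
  have hIfin : I ≠ ⊤ := claim1.ne
  have hItR : 0 < I.toReal := ENNReal.toReal_pos hIpos.ne' hIfin
  refine ⟨c * 2 ^ (1-k) * I.toReal, by positivity, ?_⟩
  filter_upwards [hineq] with x' hx' hx1
  have hxpos : (0:ℝ) < ‖x'‖ := lt_trans one_pos hx1
  have key : ENNReal.ofReal (2 * ‖x'‖) ^ (-(k-1)) * I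
      ≤ ∫⁻ y', v y' ^ p * ENNReal.ofReal ‖x' - y'‖ ^ (-(k-1)) := by
    have hpt : ∀ y' ∈ Metric.ball (0 : EuclideanSpace ℝ (Fin (N - 1))) 1,
        v y' ^ p * ENNReal.ofReal (2 * ‖x'‖) ^ (-(k-1))
          ≤ v y' ^ p * ENNReal.ofReal ‖x' - y'‖ ^ (-(k-1)) := by
      intro y' hy'
      refine mul_le_mul_right (hanti _ _ ?_) _
      apply ENNReal.ofReal_le_ofReal
      have : ‖x' - y'‖ ≤ ‖x'‖ + ‖y'‖ := norm_sub_le _ _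
      have hy1 : ‖y'‖ < 1 := by simpa using hy'
      linarith
    calc ENNReal.ofReal (2 * ‖x'‖) ^ (-(k-1)) * I
        = ∫⁻ y' in Metric.ball (0 : EuclideanSpace ℝ (Fin (N - 1))) 1,
            v y' ^ p * ENNReal.ofReal (2 * ‖x'‖) ^ (-(k-1)) := by
          rw [lintegral_mul_const' _ _ (by
            rw [Ne, ENNReal.rpow_eq_top_iff]
            push_neg
            constructor
            · intro h; exact absurd h (by positivity : (0:ℝ≥0∞) < ENNReal.ofReal (2*‖x'‖)).ne'
            · intro h; exact absurd h ENNReal.ofReal_ne_top)]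
          ring
      _ ≤ ∫⁻ y' in Metric.ball (0 : EuclideanSpace ℝ (Fin (N - 1))) 1,
            v y' ^ p * ENNReal.ofReal ‖x' - y'‖ ^ (-(k-1)) :=
          setLIntegral_mono (hmeas.mul (hker x')) hpt
      _ ≤ _ := setLIntegral_le_lintegral _ _
  have heq : ENNReal.ofReal (c * 2 ^ (1-k) * I.toReal * ‖x'‖ ^ (1-k))
      = ENNReal.ofReal c * (ENNReal.ofReal (2 * ‖x'‖) ^ (-(k-1)) * I) := by
    have h2x : (2:ℝ) ^ (1-k) * ‖x'‖ ^ (1-k) = (2 * ‖x'‖) ^ (1-k) :=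
      (Real.mul_rpow (by norm_num) hxpos.le).symm
    have hor : ENNReal.ofReal ((2 * ‖x'‖) ^ (1-k)) = ENNReal.ofReal (2 * ‖x'‖) ^ (-(k-1)) := by
      rw [ENNReal.ofReal_rpow_of_pos (by positivity)]
      norm_num
    calc ENNReal.ofReal (c * 2 ^ (1-k) * I.toReal * ‖x'‖ ^ (1-k))
        = ENNReal.ofReal (c * ((2 * ‖x'‖) ^ (1-k) * I.toReal)) := by
          rw [← h2x]; ring_nf
      _ = ENNReal.ofReal c * (ENNReal.ofReal ((2 * ‖x'‖) ^ (1-k)) * ENNReal.ofReal I.toReal) := by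
          rw [ENNReal.ofReal_mul hc.le, ENNReal.ofReal_mul (by positivity)]
      _ = _ := by rw [hor, ENNReal.ofReal_toReal hIfin]
  calc ENNReal.ofReal (c * 2 ^ (1-k) * I.toReal * ‖x'‖ ^ (1-k))
      = ENNReal.ofReal c * (ENNReal.ofReal (2 * ‖x'‖) ^ (-(k-1)) * I) := heq
    _ ≤ ENNReal.ofReal c * ∫⁻ y', v y' ^ p * ENNReal.ofReal ‖x' - y'‖ ^ (-(k-1)) :=
        mul_le_mul_right key _
    _ ≤ v x' := hx'


end
end

section
/- Let N ≥ 3, 1 < k < N-1, 0 < p < (N-1)/(k-1) and c > 0, and let (γ_n) be defined by γ_0 = k-1 and γ_{n+1} = p γ_n + k − N. Let v : ℝ^{N-1} → [0,∞] be measurable with v > 0 a.e., v(x') < ∞ for a.e. x', and v(x') ≥ c ∫_{ℝ^{N-1}} v(y')^p |x'-y'|^{-(k-1)} dy' for a.e. x' ∈ ℝ^{N-1}. Then for every n ≥ 0 with γ_n > 0 there exists a constant C_n > 0 such that v(x') ≥ C_n |x'|^{-γ_n} for a.e. x' ∈ ℝ^{N-1} with |x'| > 1. -/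
open MeasureTheory ENNReal Filter

noncomputable section

open Metric in
private lemma aux_rpow_neg_le {b a s : ℝ} (hs : 0 < s) (hba : b ≤ a) :
    ENNReal.ofReal (a ^ (-s)) ≤ ENNReal.ofReal b ^ (-s) := by
  rcases le_or_gt b 0 with hb | hb
  · have hb0 : ENNReal.ofReal b = 0 := ENNReal.ofReal_eq_zero.2 hb
    rw [hb0, ENNReal.zero_rpow_of_neg (by linarith)]
    exact le_top
  · rw [ENNReal.ofReal_rpow_of_pos hb]
    exact ENNReal.ofReal_le_ofReal (Real.rpow_le_rpow_of_nonpos hb hba (by linarith))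

private lemma aux_setLIntegral_ge {α : Type*} [MeasurableSpace α] (μ : Measure α)
    {S : Set α} (hS : MeasurableSet S) (f : α → ℝ≥0∞) (ε : ℝ≥0∞)
    (h : ∀ᵐ y ∂μ, y ∈ S → ε ≤ f y) : ε * μ S ≤ ∫⁻ y, f y ∂μ := by
  calc ε * μ S = ∫⁻ _ in S, ε ∂μ := (setLIntegral_const S ε).symm
    _ ≤ ∫⁻ y in S, f y ∂μ := lintegral_mono_ae ((ae_restrict_iff' hS).2 h)
    _ ≤ ∫⁻ y, f y ∂μ := setLIntegral_le_lintegral S f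

/-- Lemma 3.2(ii): with `γ₀ = k-1`, `γ_{n+1} = pγ_n + k - N`, whenever `γ_n > 0` there is
`C_n > 0` such that `v(x') ≥ C_n |x'|^{-γ_n}` for a.e. `|x'| > 1`. -/
theorem gamma_sequence_lower_bound
    (N : ℕ) (hN : 3 ≤ N) (k p c : ℝ)
    (hk1 : 1 < k) (hkN : k < (N : ℝ) - 1)
    (hp0 : 0 < p) (hp : p < ((N : ℝ) - 1) / (k - 1)) (hc : 0 < c)
    (γ : ℕ → ℝ) (hγ0 : γ 0 = k - 1) (hγ : ∀ n, γ (n + 1) = p * γ n + k - N)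
    (v : EuclideanSpace ℝ (Fin (N - 1)) → ℝ≥0∞) (hv : Measurable v)
    (hpos : ∀ᵐ x' ∂(volume : Measure (EuclideanSpace ℝ (Fin (N - 1)))), 0 < v x')
    (hfin : ∀ᵐ x' ∂(volume : Measure (EuclideanSpace ℝ (Fin (N - 1)))), v x' < ⊤)
    (hineq : ∀ᵐ x' ∂(volume : Measure (EuclideanSpace ℝ (Fin (N - 1)))),
      ENNReal.ofReal c * ∫⁻ y', v y' ^ p * ENNReal.ofReal ‖x' - y'‖ ^ (-(k - 1)) ≤ v x') :
    ∀ n : ℕ, 0 < γ n →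
      ∃ C > 0, ∀ᵐ x' ∂(volume : Measure (EuclideanSpace ℝ (Fin (N - 1)))),
        1 < ‖x'‖ → ENNReal.ofReal (C * ‖x'‖ ^ (-γ n)) ≤ v x' := by
  classical
  have hs : (0:ℝ) < k - 1 := by linarith
  set s : ℝ := k - 1 with hs_def
  obtain ⟨d, hd_def⟩ : ∃ d : ℕ, d = N - 1 := ⟨N - 1, rfl⟩
  have hdcast : (d : ℝ) = (N : ℝ) - 1 := by
    rw [hd_def, Nat.cast_sub (by omega : 1 ≤ N)]; norm_num
  have hfinrank : Module.finrank ℝ (EuclideanSpace ℝ (Fin (N - 1))) = d := by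
    rw [hd_def]; exact finrank_euclideanSpace_fin
  have hvmeas : Measurable fun y : EuclideanSpace ℝ (Fin (N - 1)) => v y ^ p :=
    ENNReal.continuous_rpow_const.measurable.comp hv
  have hB1pos : 0 < volume (Metric.ball (0 : EuclideanSpace ℝ (Fin (N - 1))) 1) := Metric.measure_ball_pos volume 0 one_pos
  have hB1top : volume (Metric.ball (0 : EuclideanSpace ℝ (Fin (N - 1))) 1) < ⊤ := measure_ball_lt_top
  intro n
  induction n with
  | zero =>
    intro _
    set B := Metric.ball (0 : EuclideanSpace ℝ (Fin (N - 1))) 1 with hB_def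
    set A : ℝ≥0∞ := ∫⁻ y in B, v y ^ p with hA_def
    have hA0 : 0 < A := by
      rw [pos_iff_ne_zero]
      intro h0
      have hz := (lintegral_eq_zero_iff hvmeas).1 h0
      have hpos' : ∀ᵐ y ∂(volume.restrict B), 0 < v y := ae_restrict_of_ae hpos
      have hfalse : ∀ᵐ y ∂(volume.restrict B), False := by
        filter_upwards [hz, hpos'] with y h1 h2
        simp only [Pi.zero_apply] at h1
        rw [ENNReal.rpow_eq_zero_iff] at h1
        rcases h1 with ⟨h3, _⟩ | ⟨_, h4⟩
        · exact absurd h3 h2.ne'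
        · linarith
      exact absurd (Measure.restrict_eq_zero.1
        (ae_eq_bot.1 (Filter.eventually_false_iff_eq_bot.1 hfalse))) hB1pos.ne'
    set m : ℝ≥0∞ := min A 1 with hm_def
    have hm0 : 0 < m := lt_min hA0 one_pos
    have hmtop : m ≠ ⊤ := ne_top_of_le_ne_top one_ne_top (min_le_right _ _)
    have hmr : 0 < m.toReal := ENNReal.toReal_pos hm0.ne' hmtop
    have h2s : (0:ℝ) < (2:ℝ) ^ (-s) := Real.rpow_pos_of_pos (by norm_num) _
    refine ⟨c * m.toReal * (2:ℝ) ^ (-s), by positivity, ?_⟩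
    filter_upwards [hineq] with x' hx' hR
    set R := ‖x'‖ with hR_def
    have hR0 : (0:ℝ) < R := by linarith
    rw [hγ0]
    have key : ENNReal.ofReal ((2*R) ^ (-s)) * m ≤
        ∫⁻ y', v y' ^ p * ENNReal.ofReal ‖x' - y'‖ ^ (-s) := by
      have step1 : ∀ y ∈ B, ENNReal.ofReal ((2*R) ^ (-s)) * (v y ^ p) ≤
          v y ^ p * ENNReal.ofReal ‖x' - y‖ ^ (-s) := by
        intro y hy
        rw [mul_comm]
        refine mul_le_mul_right ?_ _
        have hy1 : ‖y‖ < 1 := mem_ball_zero_iff.1 hy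
        have hle : ‖x' - y‖ ≤ 2 * R := by
          calc ‖x' - y‖ ≤ ‖x'‖ + ‖y‖ := norm_sub_le x' y
            _ ≤ R + 1 := by rw [← hR_def]; linarith
            _ ≤ 2 * R := by linarith
        exact aux_rpow_neg_le hs hle
      calc ENNReal.ofReal ((2*R) ^ (-s)) * m
          ≤ ENNReal.ofReal ((2*R) ^ (-s)) * A := mul_le_mul_right (min_le_left _ _) _
        _ = ∫⁻ y in B, ENNReal.ofReal ((2*R) ^ (-s)) * (v y ^ p) := by
            rw [hA_def]; exact (lintegral_const_mul _ hvmeas).symm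
        _ ≤ ∫⁻ y in B, v y ^ p * ENNReal.ofReal ‖x' - y‖ ^ (-s) :=
            setLIntegral_mono' measurableSet_ball step1
        _ ≤ ∫⁻ y, v y ^ p * ENNReal.ofReal ‖x' - y‖ ^ (-s) :=
            setLIntegral_le_lintegral _ _
    have hfin2 : ENNReal.ofReal c * (ENNReal.ofReal ((2*R) ^ (-s)) * m) ≤ v x' :=
      le_trans (mul_le_mul_right key _) hx'
    refine le_trans ?_ (le_trans
      (mul_le_mul_right (mul_le_mul_right ENNReal.ofReal_toReal_le _) _) hfin2)
    refine le_of_eq ?_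
    rw [← ENNReal.ofReal_mul (by positivity : (0:ℝ) ≤ (2*R) ^ (-s)),
      ← ENNReal.ofReal_mul hc.le]
    congr 1
    rw [Real.mul_rpow (by norm_num : (0:ℝ) ≤ 2) hR0.le]
    ring
  | succ n ih =>
    intro hγn1
    have hγnpos : 0 < γ n := by
      have h1 := hγ n
      have hkN' : k - (N:ℝ) < 0 := by
        have h2 : (N:ℝ) - 1 < N := by linarith
        linarith
      nlinarith
    obtain ⟨C, hC, hae⟩ := ih hγnpos
    set g := γ n with hg_def
    set b := (volume (Metric.ball (0 : EuclideanSpace ℝ (Fin (N - 1))) 1)).toReal with hb_def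
    have hb : 0 < b := ENNReal.toReal_pos hB1pos.ne' hB1top.ne
    have h2d : (1:ℝ) < 2 ^ d := by
      have hd1 : 1 ≤ d := by omega
      calc (1:ℝ) < 2 := one_lt_two
        _ = 2^1 := (pow_one 2).symm
        _ ≤ 2^d := pow_le_pow_right₀ one_le_two hd1
    have hCp : (0:ℝ) < (C * 2 ^ (-g)) ^ p := Real.rpow_pos_of_pos (by positivity) p
    have h3s : (0:ℝ) < (3:ℝ) ^ (-s) := Real.rpow_pos_of_pos (by norm_num) _
    refine ⟨c * (C * 2 ^ (-g)) ^ p * 3 ^ (-s) * ((2:ℝ) ^ d - 1) * b,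
      mul_pos (mul_pos (mul_pos (mul_pos hc hCp) h3s) (by linarith)) hb, ?_⟩
    filter_upwards [hineq] with x' hx' hR
    set R := ‖x'‖ with hR_def
    have hR0 : (0:ℝ) < R := by linarith
    set S : Set (EuclideanSpace ℝ (Fin (N - 1))) := Metric.ball (0 : EuclideanSpace ℝ (Fin (N - 1))) (2*R) \ Metric.closedBall (0 : EuclideanSpace ℝ (Fin (N - 1))) R with hS_def
    have hSmeas : MeasurableSet S := measurableSet_ball.diff measurableSet_closedBall
    have hvolS : volume S
        = ENNReal.ofReal (((2:ℝ)^d - 1) * R^d) * volume (Metric.ball (0 : EuclideanSpace ℝ (Fin (N - 1))) 1) := by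
      have hsub : Metric.closedBall (0 : EuclideanSpace ℝ (Fin (N - 1))) R ⊆ Metric.ball (0 : EuclideanSpace ℝ (Fin (N - 1))) (2*R) :=
        Metric.closedBall_subset_ball (by linarith)
      rw [hS_def, measure_diff hsub measurableSet_closedBall.nullMeasurableSet
          measure_closedBall_lt_top.ne,
        Measure.addHaar_ball_of_pos volume (0 : EuclideanSpace ℝ (Fin (N - 1))) (by linarith : (0:ℝ) < 2*R),
        Measure.addHaar_closedBall volume (0 : EuclideanSpace ℝ (Fin (N - 1))) hR0.le, hfinrank,
        ← ENNReal.sub_mul (fun _ _ => hB1top.ne),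
        ← ENNReal.ofReal_sub _ (by positivity : (0:ℝ) ≤ R ^ d)]
      congr 2
      ring
    set ε : ℝ≥0∞ := ENNReal.ofReal ((C * (2*R) ^ (-g)) ^ p * (3*R) ^ (-s)) with hε_def
    have hptwise : ∀ᵐ y ∂(volume : Measure (EuclideanSpace ℝ (Fin (N - 1)))), y ∈ S →
        ε ≤ v y ^ p * ENNReal.ofReal ‖x' - y‖ ^ (-s) := by
      filter_upwards [hae] with y hy hyS
      obtain ⟨hy2R, hyR⟩ := hyS
      have hy2R' : ‖y‖ < 2*R := mem_ball_zero_iff.1 hy2R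
      have hyR' : R < ‖y‖ := lt_of_not_ge fun h => hyR (mem_closedBall_zero_iff.2 h)
      have hy1 : 1 < ‖y‖ := lt_trans hR hyR'
      have hvy := hy hy1
      have hvy2 : ENNReal.ofReal (C * (2*R) ^ (-g)) ≤ v y := by
        refine le_trans (ENNReal.ofReal_le_ofReal ?_) hvy
        refine mul_le_mul_of_nonneg_left ?_ hC.le
        exact Real.rpow_le_rpow_of_nonpos (by linarith) hy2R'.le (by linarith)
      have h1 : ENNReal.ofReal ((C * (2*R) ^ (-g)) ^ p) ≤ v y ^ p := by
        have hCpos : (0:ℝ) < C * (2*R) ^ (-g) := by positivity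
        rw [← ENNReal.ofReal_rpow_of_pos hCpos]
        exact ENNReal.rpow_le_rpow hvy2 hp0.le
      have h2 : ENNReal.ofReal ((3*R) ^ (-s)) ≤ ENNReal.ofReal ‖x' - y‖ ^ (-s) := by
        refine aux_rpow_neg_le hs ?_
        calc ‖x' - y‖ ≤ ‖x'‖ + ‖y‖ := norm_sub_le x' y
          _ ≤ R + 2*R := by rw [← hR_def]; linarith
          _ = 3*R := by ring
      rw [hε_def, ENNReal.ofReal_mul (by positivity)]
      exact mul_le_mul' h1 h2
    have key : ε * volume S ≤
        ∫⁻ y', v y' ^ p * ENNReal.ofReal ‖x' - y'‖ ^ (-s) :=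
      aux_setLIntegral_ge volume hSmeas _ ε hptwise
    have hfin2 : ENNReal.ofReal c * (ε * volume S) ≤ v x' :=
      le_trans (mul_le_mul_right key _) hx'
    refine le_trans (le_of_eq ?_) hfin2
    have hBb : volume (Metric.ball (0 : EuclideanSpace ℝ (Fin (N - 1))) 1) = ENNReal.ofReal b :=
      (ENNReal.ofReal_toReal hB1top.ne).symm
    rw [hε_def, hvolS, hBb,
      ← ENNReal.ofReal_mul (mul_nonneg (by linarith : (0:ℝ) ≤ (2:ℝ)^d - 1) (by positivity : (0:ℝ) ≤ R^d)),
      ← ENNReal.ofReal_mul (by positivity :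
        (0:ℝ) ≤ (C * (2*R) ^ (-g)) ^ p * (3*R) ^ (-s)),
      ← ENNReal.ofReal_mul hc.le]
    congr 1
    have e1 : (C * (2*R) ^ (-g)) ^ p = (C * 2 ^ (-g)) ^ p * R ^ (-(g*p)) := by
      rw [Real.mul_rpow (by norm_num : (0:ℝ) ≤ 2) hR0.le, ← mul_assoc,
        Real.mul_rpow (by positivity) (by positivity), ← Real.rpow_mul hR0.le, neg_mul]
    have e2 : (3*R) ^ (-s) = (3:ℝ) ^ (-s) * R ^ (-s) :=
      Real.mul_rpow (by norm_num) hR0.le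
    have hexp : -γ (n+1) = (d:ℝ) + (-(g*p) + -s) := by
      rw [hγ n, hg_def, hs_def, hdcast]; ring
    have e3 : R ^ (-γ (n+1)) = R ^ d * (R ^ (-(g*p)) * R ^ (-s)) := by
      rw [hexp, Real.rpow_add hR0, Real.rpow_add hR0, Real.rpow_natCast]
    rw [e1, e2, e3]
    ring

end
end

section
/- Let N ≥ 3, 1 < k < N-1, 0 < p < (N-1)/(k-1) and c > 0. Then there is no measurable function v : ℝ^{N-1} → [0,∞] with v > 0 a.e., v(x') < ∞ for a.e. x' ∈ ℝ^{N-1}, and v(x') ≥ c ∫_{ℝ^{N-1}} v(y')^p |x'-y'|^{-(k-1)} dy' for a.e. x' ∈ ℝ^{N-1}. -/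
open MeasureTheory ENNReal Filter

noncomputable section

open Metric

private lemma rpow_neg_anti {u w : ℝ≥0∞} {r : ℝ} (hr : 0 ≤ r) (h : u ≤ w) :
    w ^ (-r) ≤ u ^ (-r) := by
  rw [ENNReal.rpow_neg, ENNReal.rpow_neg]
  exact ENNReal.inv_le_inv.mpr (ENNReal.rpow_le_rpow h hr)

private lemma annulus_lb (d : ℕ) (hd : 1 ≤ d) (x : EuclideanSpace ℝ (Fin d)) (b s R : ℝ)
    (hb : 0 ≤ b) (hs : 0 ≤ s) (hR : 1 + ‖x‖ ≤ R) :
    (ENNReal.ofReal (2 ^ d) - 1) * volume (ball (0 : EuclideanSpace ℝ (Fin d)) 1) *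
        ENNReal.ofReal 4 ^ (-(b + s)) * ENNReal.ofReal R ^ ((d : ℝ) - (b + s)) ≤
      ∫⁻ y in ball (0 : EuclideanSpace ℝ (Fin d)) (2 * R) \ ball 0 R,
        ENNReal.ofReal (1 + ‖y‖) ^ (-b) * ENNReal.ofReal ‖x - y‖ ^ (-s) := by
  haveI : Nonempty (Fin d) := ⟨⟨0, hd⟩⟩
  have hx0 := norm_nonneg x
  have hR1 : (1:ℝ) ≤ R := by linarith
  have hR0 : (0:ℝ) < R := by linarith
  have hRne0 : ENNReal.ofReal R ≠ 0 := by
    simp only [ne_eq, ENNReal.ofReal_eq_zero, not_le]; linarith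
  set A := ball (0 : EuclideanSpace ℝ (Fin d)) (2 * R) \ ball 0 R with hA
  have hAm : MeasurableSet A := measurableSet_ball.diff measurableSet_ball
  have hpt : ∀ y ∈ A, (ENNReal.ofReal 4 * ENNReal.ofReal R) ^ (-(b + s)) ≤
      ENNReal.ofReal (1 + ‖y‖) ^ (-b) * ENNReal.ofReal ‖x - y‖ ^ (-s) := by
    intro y hy
    have hy2 : ‖y‖ < 2 * R := by
      have := hy.1; rwa [mem_ball_zero_iff] at this
    have hy0 := norm_nonneg y
    have h1 : (1:ℝ) + ‖y‖ ≤ 4 * R := by linarith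
    have h2 : ‖x - y‖ ≤ 4 * R := by
      calc ‖x - y‖ ≤ ‖x‖ + ‖y‖ := norm_sub_le x y
        _ ≤ 4 * R := by linarith
    have e1 : ENNReal.ofReal (4 * R) ^ (-b) ≤ ENNReal.ofReal (1 + ‖y‖) ^ (-b) :=
      rpow_neg_anti hb (ENNReal.ofReal_le_ofReal h1)
    have e2 : ENNReal.ofReal (4 * R) ^ (-s) ≤ ENNReal.ofReal ‖x - y‖ ^ (-s) :=
      rpow_neg_anti hs (ENNReal.ofReal_le_ofReal h2)
    have h4R : ENNReal.ofReal (4 * R) ≠ 0 := by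
      simp only [ne_eq, ENNReal.ofReal_eq_zero, not_le]; linarith
    calc (ENNReal.ofReal 4 * ENNReal.ofReal R) ^ (-(b + s))
        = ENNReal.ofReal (4 * R) ^ (-(b + s)) := by
          rw [← ENNReal.ofReal_mul (by norm_num)]
      _ = ENNReal.ofReal (4 * R) ^ (-b) * ENNReal.ofReal (4 * R) ^ (-s) := by
          rw [neg_add, ENNReal.rpow_add _ _ h4R ENNReal.ofReal_ne_top]
      _ ≤ _ := mul_le_mul' e1 e2
  have hRd : ENNReal.ofReal (R ^ d) = ENNReal.ofReal R ^ (d : ℝ) := by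
    rw [← Real.rpow_natCast R d, ENNReal.ofReal_rpow_of_pos hR0]
  have hμA : volume A = (ENNReal.ofReal (2 ^ d) - 1) *
      (ENNReal.ofReal R ^ (d : ℝ) * volume (ball (0 : EuclideanSpace ℝ (Fin d)) 1)) := by
    have hsub : ball (0 : EuclideanSpace ℝ (Fin d)) R ⊆ ball 0 (2 * R) :=
      ball_subset_ball (by linarith)
    rw [hA, measure_diff hsub measurableSet_ball.nullMeasurableSet measure_ball_lt_top.ne,
      Measure.addHaar_ball volume (0 : EuclideanSpace ℝ (Fin d)) (by positivity : (0:ℝ) ≤ 2 * R), Measure.addHaar_ball volume (0 : EuclideanSpace ℝ (Fin d)) hR0.le,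
      finrank_euclideanSpace_fin, mul_pow, ENNReal.ofReal_mul (by positivity), hRd]
    rw [ENNReal.sub_mul (fun _ _ => by
      exact ENNReal.mul_ne_top (by simp [ENNReal.rpow_eq_top_iff, hRne0]) measure_ball_lt_top.ne)]
    rw [one_mul, mul_assoc]
  calc (ENNReal.ofReal (2 ^ d) - 1) * volume (ball (0 : EuclideanSpace ℝ (Fin d)) 1) *
        ENNReal.ofReal 4 ^ (-(b + s)) * ENNReal.ofReal R ^ ((d : ℝ) - (b + s))
      = (ENNReal.ofReal 4 * ENNReal.ofReal R) ^ (-(b + s)) * volume A := by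
        rw [hμA, ENNReal.mul_rpow_of_ne_zero (by norm_num) hRne0]
        rw [sub_eq_add_neg, ENNReal.rpow_add _ _ hRne0 ENNReal.ofReal_ne_top]
        ring
    _ ≤ ∫⁻ y in A, ENNReal.ofReal (1 + ‖y‖) ^ (-b) * ENNReal.ofReal ‖x - y‖ ^ (-s) := by
        rw [← setLIntegral_const]
        exact setLIntegral_mono' hAm hpt


/-- Nonexistence for the integral inequality (3.6): if `1 < k < N-1` and
`0 < p < (N-1)/(k-1)` then there is no measurable `v : ℝ^{N-1} → [0,∞]`, a.e. positive
and finite, with `v(x') ≥ c ∫ v(y')^p |x'-y'|^{-(k-1)} dy'` a.e. -/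
theorem no_supersolution_integral_inequality
    (N : ℕ) (hN : 3 ≤ N) (k p c : ℝ)
    (hk1 : 1 < k) (hkN : k < (N : ℝ) - 1)
    (hp0 : 0 < p) (hp : p < ((N : ℝ) - 1) / (k - 1)) (hc : 0 < c) :
    ¬ ∃ v : EuclideanSpace ℝ (Fin (N - 1)) → ℝ≥0∞, Measurable v ∧
      (∀ᵐ x' ∂(volume : Measure (EuclideanSpace ℝ (Fin (N - 1)))), 0 < v x') ∧
      (∀ᵐ x' ∂(volume : Measure (EuclideanSpace ℝ (Fin (N - 1)))), v x' < ⊤) ∧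
      (∀ᵐ x' ∂(volume : Measure (EuclideanSpace ℝ (Fin (N - 1)))),
        ENNReal.ofReal c * ∫⁻ y', v y' ^ p * ENNReal.ofReal ‖x' - y'‖ ^ (-(k - 1)) ≤ v x') := by
  rintro ⟨v, hvm, hpos, hfin, hineq⟩
  have hd1 : 1 ≤ N - 1 := by omega
  have hD : ((N - 1 : ℕ) : ℝ) = (N : ℝ) - 1 := by
    rw [Nat.cast_sub (by omega : 1 ≤ N), Nat.cast_one]
  have hk0 : (0:ℝ) ≤ k - 1 := by linarith
  set B := volume (ball (0 : EuclideanSpace ℝ (Fin (N - 1))) 1) with hB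
  have hB0 : B ≠ 0 := (measure_ball_pos volume _ one_pos).ne'
  have hBt : B ≠ ⊤ := measure_ball_lt_top.ne
  have h2d1 : (ENNReal.ofReal (2 ^ (N - 1)) - 1) ≠ 0 := by
    have h2 : (1:ℝ) < 2 ^ (N - 1) := one_lt_pow₀ (by norm_num : (1:ℝ) < 2) (by omega : N - 1 ≠ 0)
    have : (1:ℝ≥0∞) < ENNReal.ofReal (2 ^ (N - 1)) := by
      rw [ENNReal.one_lt_ofReal]; linarith
    exact (tsub_pos_iff_lt.mpr this).ne'
  -- main lower bound step
  have hlow : ∀ (C : ℝ≥0∞) (aa : ℝ), 0 ≤ aa →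
      (∀ᵐ y : EuclideanSpace ℝ (Fin (N - 1)), C * ENNReal.ofReal (1 + ‖y‖) ^ (-aa) ≤ v y) →
      ∀ (x : EuclideanSpace ℝ (Fin (N - 1))) (R : ℝ), 1 + ‖x‖ ≤ R →
      C ^ p * ((ENNReal.ofReal (2 ^ (N - 1)) - 1) * B * ENNReal.ofReal 4 ^ (-(p * aa + (k - 1)))) *
        ENNReal.ofReal R ^ (((N - 1 : ℕ) : ℝ) - (p * aa + (k - 1))) ≤
      ∫⁻ y in ball (0 : EuclideanSpace ℝ (Fin (N - 1))) (2 * R) \ ball 0 R,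
        v y ^ p * ENNReal.ofReal ‖x - y‖ ^ (-(k - 1)) := by
    intro C aa haa hC x R hR
    have h1 : ∫⁻ y in ball (0 : EuclideanSpace ℝ (Fin (N - 1))) (2 * R) \ ball 0 R,
        C ^ p * (ENNReal.ofReal (1 + ‖y‖) ^ (-(p * aa)) * ENNReal.ofReal ‖x - y‖ ^ (-(k - 1))) ≤
        ∫⁻ y in ball (0 : EuclideanSpace ℝ (Fin (N - 1))) (2 * R) \ ball 0 R,
        v y ^ p * ENNReal.ofReal ‖x - y‖ ^ (-(k - 1)) := by
      apply lintegral_mono_ae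
      filter_upwards [ae_restrict_of_ae hC] with y hy
      have h2 : C ^ p * ENNReal.ofReal (1 + ‖y‖) ^ (-(p * aa)) ≤ v y ^ p := by
        have h3 := ENNReal.rpow_le_rpow hy hp0.le
        rw [ENNReal.mul_rpow_of_nonneg _ _ hp0.le, ← ENNReal.rpow_mul] at h3
        have h4 : -aa * p = -(p * aa) := by ring
        rwa [h4] at h3
      calc C ^ p * (ENNReal.ofReal (1 + ‖y‖) ^ (-(p * aa)) * ENNReal.ofReal ‖x - y‖ ^ (-(k - 1)))
          = (C ^ p * ENNReal.ofReal (1 + ‖y‖) ^ (-(p * aa))) * ENNReal.ofReal ‖x - y‖ ^ (-(k - 1)) := by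
            rw [mul_assoc]
        _ ≤ _ := mul_le_mul_left h2 _
    calc C ^ p * ((ENNReal.ofReal (2 ^ (N - 1)) - 1) * B * ENNReal.ofReal 4 ^ (-(p * aa + (k - 1)))) *
          ENNReal.ofReal R ^ (((N - 1 : ℕ) : ℝ) - (p * aa + (k - 1)))
        = C ^ p * ((ENNReal.ofReal (2 ^ (N - 1)) - 1) * B * ENNReal.ofReal 4 ^ (-(p * aa + (k - 1))) *
            ENNReal.ofReal R ^ (((N - 1 : ℕ) : ℝ) - (p * aa + (k - 1)))) := by rw [mul_assoc]
      _ ≤ C ^ p * ∫⁻ y in ball (0 : EuclideanSpace ℝ (Fin (N - 1))) (2 * R) \ ball 0 R,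
            ENNReal.ofReal (1 + ‖y‖) ^ (-(p * aa)) * ENNReal.ofReal ‖x - y‖ ^ (-(k - 1)) := by
          refine mul_le_mul_right ?_ _
          exact annulus_lb (N - 1) hd1 x (p * aa) (k - 1) R (by positivity) hk0 hR
      _ ≤ ∫⁻ y in ball (0 : EuclideanSpace ℝ (Fin (N - 1))) (2 * R) \ ball 0 R,
            C ^ p * (ENNReal.ofReal (1 + ‖y‖) ^ (-(p * aa)) * ENNReal.ofReal ‖x - y‖ ^ (-(k - 1))) :=
          lintegral_const_mul_le _ _
      _ ≤ _ := h1
  -- base case: initial lower bound with exponent k-1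
  have hQ1 : ∀ y : EuclideanSpace ℝ (Fin (N - 1)), (1:ℝ≥0∞) ≤ ENNReal.ofReal (1 + ‖y‖) := by
    intro y
    rw [← ENNReal.ofReal_one]
    exact ENNReal.ofReal_le_ofReal (by linarith [norm_nonneg y])
  have hQ0 : ∀ y : EuclideanSpace ℝ (Fin (N - 1)), ENNReal.ofReal (1 + ‖y‖) ≠ 0 := by
    intro y
    exact fun h => by simpa [h] using hQ1 y
  have hcne : ENNReal.ofReal c ≠ 0 := by
    simp only [ne_eq, ENNReal.ofReal_eq_zero, not_le]; linarith
  have hbase : ∃ C : ℝ≥0∞, C ≠ 0 ∧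
      ∀ᵐ y : EuclideanSpace ℝ (Fin (N - 1)), C * ENNReal.ofReal (1 + ‖y‖) ^ (-(k - 1)) ≤ v y := by
    set I := ∫⁻ y in ball (0 : EuclideanSpace ℝ (Fin (N - 1))) 1, v y ^ p with hI
    have hvmp : Measurable fun y : EuclideanSpace ℝ (Fin (N - 1)) => v y ^ p :=
      (ENNReal.continuous_rpow_const.measurable).comp hvm
    have hI0 : I ≠ 0 := by
      intro h0
      have h1 : ∀ᵐ y ∂(volume.restrict (ball (0 : EuclideanSpace ℝ (Fin (N - 1))) 1)), v y ^ p = 0 := by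
        have h1' := (lintegral_eq_zero_iff hvmp).mp h0
        filter_upwards [h1'] with y hy using hy
      have h2 : ∀ᵐ y ∂(volume.restrict (ball (0 : EuclideanSpace ℝ (Fin (N - 1))) 1)), 0 < v y :=
        ae_restrict_of_ae hpos
      have hne : volume.restrict (ball (0 : EuclideanSpace ℝ (Fin (N - 1))) 1) ≠ 0 := by
        rw [Ne, Measure.restrict_eq_zero]
        exact (measure_ball_pos volume 0 one_pos).ne'
      haveI := ae_neBot.mpr hne
      obtain ⟨y, hy1, hy2⟩ := (h1.and h2).exists
      rw [ENNReal.rpow_eq_zero_iff] at hy1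
      rcases hy1 with ⟨h, _⟩ | ⟨_, h⟩
      · exact hy2.ne' h
      · linarith
    refine ⟨ENNReal.ofReal c * min I 1 * ENNReal.ofReal 2 ^ (-(k - 1)), ?_, ?_⟩
    · refine mul_ne_zero (mul_ne_zero hcne ?_) ?_
      · simp only [ne_eq, min_eq_iff, not_or]
        constructor
        · rintro ⟨h, -⟩; exact hI0 h
        · rintro ⟨h, -⟩; exact one_ne_zero h
      · simp [ENNReal.rpow_eq_zero_iff]
    · filter_upwards [hineq] with x hx
      refine le_trans ?_ hx
      have hptw : ∀ y ∈ ball (0 : EuclideanSpace ℝ (Fin (N - 1))) 1,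
          ENNReal.ofReal (2 * (1 + ‖x‖)) ^ (-(k - 1)) * v y ^ p ≤
          v y ^ p * ENNReal.ofReal ‖x - y‖ ^ (-(k - 1)) := by
        intro y hy
        rw [mem_ball_zero_iff] at hy
        rw [mul_comm]
        refine mul_le_mul_right (rpow_neg_anti hk0 (ENNReal.ofReal_le_ofReal ?_)) _
        calc ‖x - y‖ ≤ ‖x‖ + ‖y‖ := norm_sub_le x y
          _ ≤ 2 * (1 + ‖x‖) := by nlinarith [norm_nonneg x]
      have hXeq : ENNReal.ofReal 2 ^ (-(k - 1)) * ENNReal.ofReal (1 + ‖x‖) ^ (-(k - 1)) =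
          ENNReal.ofReal (2 * (1 + ‖x‖)) ^ (-(k - 1)) := by
        rw [ENNReal.ofReal_mul (by norm_num),
          ENNReal.mul_rpow_of_ne_zero (by norm_num) (hQ0 x)]
      calc ENNReal.ofReal c * min I 1 * ENNReal.ofReal 2 ^ (-(k - 1)) *
            ENNReal.ofReal (1 + ‖x‖) ^ (-(k - 1))
          = ENNReal.ofReal c * (ENNReal.ofReal (2 * (1 + ‖x‖)) ^ (-(k - 1)) * min I 1) := by
            rw [← hXeq]; ring
        _ ≤ ENNReal.ofReal c *
              ∫⁻ y, v y ^ p * ENNReal.ofReal ‖x - y‖ ^ (-(k - 1)) := by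
            refine mul_le_mul_right ?_ _
            calc ENNReal.ofReal (2 * (1 + ‖x‖)) ^ (-(k - 1)) * min I 1
                ≤ ENNReal.ofReal (2 * (1 + ‖x‖)) ^ (-(k - 1)) * I :=
                  mul_le_mul_right (min_le_left _ _) _
              _ ≤ ∫⁻ y in ball (0 : EuclideanSpace ℝ (Fin (N - 1))) 1,
                    ENNReal.ofReal (2 * (1 + ‖x‖)) ^ (-(k - 1)) * v y ^ p :=
                  lintegral_const_mul_le _ _
              _ ≤ ∫⁻ y in ball (0 : EuclideanSpace ℝ (Fin (N - 1))) 1,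
                    v y ^ p * ENNReal.ofReal ‖x - y‖ ^ (-(k - 1)) :=
                  setLIntegral_mono' measurableSet_ball hptw
              _ ≤ ∫⁻ y, v y ^ p * ENNReal.ofReal ‖x - y‖ ^ (-(k - 1)) :=
                  setLIntegral_le_lintegral _ _
        _ ≤ ENNReal.ofReal c * ∫⁻ y, v y ^ p * ENNReal.ofReal ‖x - y‖ ^ (-(k - 1)) := le_rfl
  -- the exponent sequence
  set aseq : ℕ → ℝ :=
    fun n => Nat.rec (k - 1) (fun _ an => max (p * an + (k - 1) - ((N - 1 : ℕ) : ℝ)) 0) n with haseq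
  have ha0 : aseq 0 = k - 1 := rfl
  have haS : ∀ n, aseq (n + 1) = max (p * aseq n + (k - 1) - ((N - 1 : ℕ) : ℝ)) 0 := fun _ => rfl
  have han : ∀ n, 0 ≤ aseq n := by
    intro n
    cases n with
    | zero => rw [ha0]; linarith
    | succ m => rw [haS]; exact le_max_right _ _
  -- inductive a.e. lower bounds
  have hbd : ∀ n, ∃ C : ℝ≥0∞, C ≠ 0 ∧
      ∀ᵐ y : EuclideanSpace ℝ (Fin (N - 1)), C * ENNReal.ofReal (1 + ‖y‖) ^ (-(aseq n)) ≤ v y := by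
    intro n
    induction n with
    | zero => exact hbase
    | succ n ih =>
      obtain ⟨C, hC0, hCae⟩ := ih
      have hCp0 : C ^ p ≠ 0 := by
        rw [Ne, ENNReal.rpow_eq_zero_iff_of_pos hp0]; exact hC0
      refine ⟨ENNReal.ofReal c * (C ^ p * ((ENNReal.ofReal (2 ^ (N - 1)) - 1) * B *
        ENNReal.ofReal 4 ^ (-(p * aseq n + (k - 1))))), ?_, ?_⟩
      · refine mul_ne_zero hcne (mul_ne_zero hCp0 (mul_ne_zero (mul_ne_zero h2d1 hB0) ?_))
        simp [ENNReal.rpow_eq_zero_iff]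
      · filter_upwards [hineq] with x hx
        have h := hlow C (aseq n) (han n) hCae x (1 + ‖x‖) le_rfl
        have hexp : -(aseq (n + 1)) ≤ ((N - 1 : ℕ) : ℝ) - (p * aseq n + (k - 1)) := by
          rw [haS]
          have := le_max_left (p * aseq n + (k - 1) - ((N - 1 : ℕ) : ℝ)) 0
          linarith
        calc ENNReal.ofReal c * (C ^ p * ((ENNReal.ofReal (2 ^ (N - 1)) - 1) * B *
              ENNReal.ofReal 4 ^ (-(p * aseq n + (k - 1))))) *
              ENNReal.ofReal (1 + ‖x‖) ^ (-(aseq (n + 1)))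
            ≤ ENNReal.ofReal c * (C ^ p * ((ENNReal.ofReal (2 ^ (N - 1)) - 1) * B *
              ENNReal.ofReal 4 ^ (-(p * aseq n + (k - 1))))) *
              ENNReal.ofReal (1 + ‖x‖) ^ (((N - 1 : ℕ) : ℝ) - (p * aseq n + (k - 1))) :=
              mul_le_mul_right (ENNReal.rpow_le_rpow_of_exponent_le (hQ1 x) hexp) _
          _ = ENNReal.ofReal c * (C ^ p * ((ENNReal.ofReal (2 ^ (N - 1)) - 1) * B *
              ENNReal.ofReal 4 ^ (-(p * aseq n + (k - 1)))) *
              ENNReal.ofReal (1 + ‖x‖) ^ (((N - 1 : ℕ) : ℝ) - (p * aseq n + (k - 1)))) := by ring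
          _ ≤ ENNReal.ofReal c * ∫⁻ y in ball (0 : EuclideanSpace ℝ (Fin (N - 1))) (2 * (1 + ‖x‖)) \
                ball 0 (1 + ‖x‖), v y ^ p * ENNReal.ofReal ‖x - y‖ ^ (-(k - 1)) :=
              mul_le_mul_right h _
          _ ≤ ENNReal.ofReal c * ∫⁻ y, v y ^ p * ENNReal.ofReal ‖x - y‖ ^ (-(k - 1)) :=
              mul_le_mul_right (setLIntegral_le_lintegral _ _) _
          _ ≤ v x := hx
  -- termination of the exponent sequence
  have hterm : ∃ n, p * aseq n + (k - 1) ≤ ((N - 1 : ℕ) : ℝ) := by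
    by_contra hcon
    push_neg at hcon
    have hrec : ∀ n, aseq (n + 1) = p * aseq n + (k - 1) - ((N - 1 : ℕ) : ℝ) := by
      intro n; rw [haS]; exact max_eq_left (by linarith [hcon n])
    have hδ0 : (0:ℝ) < ((N - 1 : ℕ) : ℝ) - (k - 1) := by rw [hD]; linarith
    rcases le_or_gt p 1 with hple | hpgt
    · have hstepdec : ∀ n, aseq (n + 1) ≤ aseq n - (((N - 1 : ℕ) : ℝ) - (k - 1)) := by
        intro n
        have h1 : p * aseq n ≤ aseq n := mul_le_of_le_one_left (han n) hple
        rw [hrec]; linarith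
      have hlin : ∀ n : ℕ, aseq n ≤ aseq 0 - n * (((N - 1 : ℕ) : ℝ) - (k - 1)) := by
        intro n
        induction n with
        | zero => simp
        | succ m ih =>
          have := hstepdec m
          push_cast
          push_cast at ih
          linarith
      obtain ⟨n, hn⟩ := exists_nat_gt (aseq 0 / (((N - 1 : ℕ) : ℝ) - (k - 1)))
      rw [div_lt_iff₀ hδ0] at hn
      have h1 := hlin n
      have h2 := han n
      linarith
    · have hp1 : (0:ℝ) < p - 1 := by linarith
      set t := (((N - 1 : ℕ) : ℝ) - (k - 1)) / (p - 1) with ht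
      have hb : p * t - t = ((N - 1 : ℕ) : ℝ) - (k - 1) := by
        rw [ht]; field_simp
      have hfixed : ∀ n, aseq n - t = p ^ n * (aseq 0 - t) := by
        intro n
        induction n with
        | zero => simp
        | succ m ih =>
          calc aseq (m + 1) - t
              = p * (aseq m - t) + (p * t - t + (k - 1) - ((N - 1 : ℕ) : ℝ)) := by rw [hrec]; ring
            _ = p * (p ^ m * (aseq 0 - t)) := by rw [ih, hb]; ring
            _ = p ^ (m + 1) * (aseq 0 - t) := by ring
      have hpk : p * (k - 1) < ((N - 1 : ℕ) : ℝ) := by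
        rw [hD]
        have := (lt_div_iff₀ (by linarith : (0:ℝ) < k - 1)).mp hp
        linarith
      have h00 : aseq 0 - t < 0 := by
        rw [ha0, sub_neg, ht, lt_div_iff₀ hp1]
        nlinarith
      have ht0 : 0 < t := by rw [ht]; positivity
      obtain ⟨n, hn⟩ := pow_unbounded_of_one_lt (t / (t - aseq 0)) hpgt
      have hta : 0 < t - aseq 0 := by rw [ha0]; rw [ha0] at h00; linarith
      rw [div_lt_iff₀ hta] at hn
      have h1 := hfixed n
      have h2 := han n
      nlinarith
  -- final contradiction via divergence
  obtain ⟨n, hnle⟩ := hterm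
  obtain ⟨C, hC0, hCae⟩ := hbd n
  have hvol : (volume : Measure (EuclideanSpace ℝ (Fin (N - 1)))) ≠ 0 := by
    intro h
    have h2 := measure_ball_pos volume (0 : EuclideanSpace ℝ (Fin (N - 1))) one_pos
    rw [h] at h2
    simp at h2
  haveI := ae_neBot.mpr hvol
  obtain ⟨x, hx1, hx2⟩ := (hfin.and hineq).exists
  have hR01 : (1:ℝ) ≤ 1 + ‖x‖ := by linarith [norm_nonneg x]
  set A : ℕ → Set (EuclideanSpace ℝ (Fin (N - 1))) :=
    fun j => ball (0 : EuclideanSpace ℝ (Fin (N - 1))) (2 * (2 ^ j * (1 + ‖x‖))) \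
      ball 0 (2 ^ j * (1 + ‖x‖)) with hAdef
  have hAm : ∀ j, MeasurableSet (A j) := fun j => measurableSet_ball.diff measurableSet_ball
  have hdisj : Pairwise (Function.onFun Disjoint A) := by
    have key : ∀ i j, i < j → Disjoint (A i) (A j) := by
      intro i j hij
      rw [Set.disjoint_left]
      intro y hyi hyj
      have h1 : ‖y‖ < 2 * (2 ^ i * (1 + ‖x‖)) := by
        have := hyi.1; rwa [mem_ball_zero_iff] at this
      apply hyj.2
      rw [mem_ball_zero_iff]
      have h2 : (2:ℝ) ^ (i + 1) ≤ 2 ^ j := by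
        apply pow_le_pow_right₀ one_le_two
        omega
      rw [pow_succ] at h2
      nlinarith
    intro i j hij
    rcases lt_or_gt_of_ne hij with h | h
    · exact key i j h
    · exact (key j i h).symm
  have hW0 : C ^ p * ((ENNReal.ofReal (2 ^ (N - 1)) - 1) * B *
      ENNReal.ofReal 4 ^ (-(p * aseq n + (k - 1)))) ≠ 0 := by
    refine mul_ne_zero ?_ (mul_ne_zero (mul_ne_zero h2d1 hB0) ?_)
    · rw [Ne, ENNReal.rpow_eq_zero_iff_of_pos hp0]; exact hC0
    · simp [ENNReal.rpow_eq_zero_iff]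
  have hjlb : ∀ j : ℕ, C ^ p * ((ENNReal.ofReal (2 ^ (N - 1)) - 1) * B *
      ENNReal.ofReal 4 ^ (-(p * aseq n + (k - 1)))) ≤
      ∫⁻ y in A j, v y ^ p * ENNReal.ofReal ‖x - y‖ ^ (-(k - 1)) := by
    intro j
    have hpowj : (1:ℝ) ≤ 2 ^ j := one_le_pow₀ one_le_two
    have hRj : 1 + ‖x‖ ≤ 2 ^ j * (1 + ‖x‖) := by nlinarith
    have h := hlow C (aseq n) (han n) hCae x (2 ^ j * (1 + ‖x‖)) hRj
    refine le_trans ?_ h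
    conv_lhs => rw [← mul_one (C ^ p * ((ENNReal.ofReal (2 ^ (N - 1)) - 1) * B *
      ENNReal.ofReal 4 ^ (-(p * aseq n + (k - 1)))))]
    refine mul_le_mul_right ?_ _
    have h1 : (1:ℝ≥0∞) ≤ ENNReal.ofReal (2 ^ j * (1 + ‖x‖)) := by
      rw [← ENNReal.ofReal_one]
      exact ENNReal.ofReal_le_ofReal (by nlinarith)
    calc (1:ℝ≥0∞) = 1 ^ (((N - 1 : ℕ) : ℝ) - (p * aseq n + (k - 1))) := (ENNReal.one_rpow _).symm
      _ ≤ _ := ENNReal.rpow_le_rpow h1 (by linarith)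
  have hdiv : (⊤:ℝ≥0∞) ≤ ∫⁻ y, v y ^ p * ENNReal.ofReal ‖x - y‖ ^ (-(k - 1)) := by
    calc (⊤:ℝ≥0∞) = ∑' _ : ℕ, C ^ p * ((ENNReal.ofReal (2 ^ (N - 1)) - 1) * B *
          ENNReal.ofReal 4 ^ (-(p * aseq n + (k - 1)))) :=
          (ENNReal.tsum_const_eq_top_of_ne_zero hW0).symm
      _ ≤ ∑' j : ℕ, ∫⁻ y in A j, v y ^ p * ENNReal.ofReal ‖x - y‖ ^ (-(k - 1)) :=
          ENNReal.tsum_le_tsum hjlb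
      _ = ∫⁻ y in ⋃ j, A j, v y ^ p * ENNReal.ofReal ‖x - y‖ ^ (-(k - 1)) :=
          (lintegral_iUnion hAm hdisj _).symm
      _ ≤ ∫⁻ y, v y ^ p * ENNReal.ofReal ‖x - y‖ ^ (-(k - 1)) :=
          setLIntegral_le_lintegral _ _
  have hxt : v x = ⊤ := by
    have h3 : ENNReal.ofReal c * ⊤ ≤ v x :=
      le_trans (mul_le_mul_right hdiv _) hx2
    rw [ENNReal.mul_top hcne] at h3
    exact top_le_iff.mp h3
  exact hx1.ne hxt

end
end
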